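/- arXiv:2505.10981 — 5 statements merged into one kernel-verified Lean document; each statement's English description precedes it below -/
import Mathlib

section
/- If p_1 > p_j for every j ≠ 1 (i.e., answer a_1 is the unique most likely answer; an 'easy question'), then the majority-vote success probability Pr(a_1 | p; N) tends to 1 as N → ∞. -/
open Finset Filter

/-- Number of the `N` samples in `ω` equal to answer `j`. -/
def count {m N : ℕ} (ω : Fin N → Fin m) (j : Fin m) : ℕ :=
  (Finset.univ.filter fun i => ω i = j).card

/-- The set `J(ω)` of answers achieving the maximal count among the samples `ω`. -/
def maxSet {m N : ℕ} (ω : Fin N → Fin m) : Finset (Fin m) :=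
  Finset.univ.filter fun j => ∀ k, count ω k ≤ count ω j

/-- Majority-vote probability that answer `l` is returned after `N` i.i.d. samples
drawn from `p`: the most frequent answer is chosen, ties broken uniformly. -/
noncomputable def majorityProb {m : ℕ} (p : Fin m → ℝ) (N : ℕ) (l : Fin m) : ℝ :=
  ∑ ω : Fin N → Fin m, (∏ i, p (ω i)) *
    (if l ∈ maxSet ω then (1 : ℝ) / ((maxSet ω).card : ℝ) else 0)

/-- Product over samples rewritten as a product over answers, with multiplicities. -/
lemma prod_comp_count {m N : ℕ} (ω : Fin N → Fin m) (f : Fin m → ℝ) :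
    ∏ i, f (ω i) = ∏ k, f k ^ count ω k := by
  rw [← Finset.prod_fiberwise' Finset.univ ω f]
  exact Finset.prod_congr rfl fun k _ => by rw [Finset.prod_const]; rfl

/-- Expansion of the sum over all sample sequences of a product. -/
lemma sum_prod_eq_pow {m N : ℕ} (f : Fin m → ℝ) :
    ∑ ω : Fin N → Fin m, ∏ i, f (ω i) = (∑ k, f k) ^ N := (Fintype.sum_pow f N).symm

/-- For an easy question (`a_1` is the unique most likely answer),
the majority-vote success probability tends to `1` as `N → ∞`. -/
theorem easy_question_tendsto_one {m : ℕ} (hm : 0 < m) (p : Fin m → ℝ)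
    (hnn : ∀ j, 0 ≤ p j) (hsum : ∑ j, p j = 1)
    (heasy : ∀ j, j ≠ (⟨0, hm⟩ : Fin m) → p j < p ⟨0, hm⟩) :
    Tendsto (fun N => majorityProb p N ⟨0, hm⟩) atTop (nhds 1) := by
  set z : Fin m := ⟨0, hm⟩ with hz
  -- positivity of the top probability
  have hpz : 0 < p z := by
    by_contra h
    push_neg at h
    have hz0 : p z = 0 := le_antisymm h (hnn z)
    have hle : ∀ j, p j ≤ 0 := by
      intro j
      rcases eq_or_ne j z with rfl | hj
      · exact h
      · exact le_of_lt (hz0 ▸ heasy j hj)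
    have : (1 : ℝ) ≤ 0 := hsum ▸ Finset.sum_nonpos fun j _ => hle j
    linarith
  -- the tilting parameter
  set t : Fin m → ℝ := fun j => Real.sqrt ((p j + p z) / (2 * p z)) with htdef
  have htpos : ∀ j, 0 < t j := by
    intro j
    apply Real.sqrt_pos.2
    have := hnn j
    positivity
  have htsq : ∀ j, 2 * p z * t j ^ 2 = p j + p z := by
    intro j
    have hnnj := hnn j
    have h1 : t j ^ 2 = (p j + p z) / (2 * p z) := Real.sq_sqrt (by positivity)
    rw [h1]
    field_simp
  have htlt : ∀ j, j ≠ z → t j < 1 := by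
    intro j hj
    have ht2 : t j ^ 2 < 1 := by nlinarith [htsq j, heasy j hj, hpz]
    nlinarith [ht2, htpos j]
  -- the tilting weights
  set w : Fin m → Fin m → ℝ := fun j k => if k = z then t j else if k = j then (t j)⁻¹ else 1
    with hw
  have hwpos : ∀ j k, 0 < w j k := by
    intro j k
    simp only [hw]
    split_ifs
    · exact htpos j
    · exact inv_pos.2 (htpos j)
    · exact one_pos
  -- the contraction factors
  set c : Fin m → ℝ := fun j => ∑ k, p k * w j k with hc
  have hcval : ∀ j, c j = ∑ k, p k * w j k := fun j => rfl
  have hcnn : ∀ j, 0 ≤ c j := fun j =>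
    (hcval j) ▸ Finset.sum_nonneg fun k _ => mul_nonneg (hnn k) (hwpos j k).le
  have hclt : ∀ j, j ≠ z → c j < 1 := by
    intro j hj
    have h1 : c j - 1 = ∑ k, p k * (w j k - 1) := by
      have e : ∑ k, p k * (w j k - 1) = (∑ k, p k * w j k) - ∑ k, p k := by
        rw [← Finset.sum_sub_distrib]
        exact Finset.sum_congr rfl fun k _ => by ring
      rw [e, hsum, hcval j]
    have h2 : ∑ k, p k * (w j k - 1) = p z * (t j - 1) + p j * ((t j)⁻¹ - 1) := by
      rw [← Finset.sum_subset (Finset.subset_univ ({z, j} : Finset (Fin m)))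
        (fun k _ hk => ?_)]
      · rw [Finset.sum_pair (show z ≠ j from Ne.symm hj)]
        simp [hw, hj]
      · simp only [Finset.mem_insert, Finset.mem_singleton, not_or] at hk
        simp [hw, hk.1, hk.2]
    have h3 : p j < p z * t j := by
      nlinarith [htsq j, mul_pos hpz (htpos j), hnn j, heasy j hj, hpz,
        mul_nonneg (hnn j) (sub_pos.2 (heasy j hj)).le]
    have hti : 0 < (t j)⁻¹ := inv_pos.2 (htpos j)
    have htj1 : t j * (t j)⁻¹ = 1 := mul_inv_cancel₀ (htpos j).ne'
    have h4 : p z * (t j - 1) + p j * ((t j)⁻¹ - 1) < 0 := by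
      nlinarith [htlt j hj, mul_lt_mul_of_pos_right h3 hti]
    rw [h2] at h1
    linarith [h1, h4]
  -- total probability is one
  have hone : ∀ N : ℕ, ∑ ω : Fin N → Fin m, ∏ i, p (ω i) = 1 := by
    intro N
    rw [sum_prod_eq_pow, hsum, one_pow]
  -- upper bound: majority probability at most 1
  have hub : ∀ N, majorityProb p N z ≤ 1 := by
    intro N
    have hle : majorityProb p N z ≤ ∑ ω : Fin N → Fin m, ∏ i, p (ω i) := by
      rw [majorityProb]
      apply Finset.sum_le_sum
      intro ω _
      have hp : 0 ≤ ∏ i, p (ω i) := Finset.prod_nonneg fun i _ => hnn _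
      have hwt : (if z ∈ maxSet ω then (1 : ℝ) / ((maxSet ω).card : ℝ) else 0) ≤ 1 := by
        split_ifs with h
        · have hcard : (1 : ℝ) ≤ ((maxSet ω).card : ℝ) :=
            Nat.one_le_cast.2 (Finset.card_pos.2 ⟨z, h⟩)
          rw [div_le_one (by linarith)]
          linarith
        · linarith
      calc (∏ i, p (ω i)) * _ ≤ (∏ i, p (ω i)) * 1 := mul_le_mul_of_nonneg_left hwt hp
        _ = ∏ i, p (ω i) := mul_one _
    exact le_of_le_of_eq hle (hone N)
  -- main estimate: failure probability union bound
  have hmain : ∀ N, 1 - majorityProb p N z ≤ ∑ j ∈ Finset.univ.erase z, c j ^ N := by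
    intro N
    have h1 : 1 - majorityProb p N z = ∑ ω : Fin N → Fin m, (∏ i, p (ω i)) *
        (1 - (if z ∈ maxSet ω then (1 : ℝ) / ((maxSet ω).card : ℝ) else 0)) := by
      conv_lhs => rw [← hone N]
      rw [majorityProb, ← Finset.sum_sub_distrib]
      exact Finset.sum_congr rfl fun ω _ => by ring
    have pointwise : ∀ ω ∈ (Finset.univ : Finset (Fin N → Fin m)), (∏ i, p (ω i)) *
        (1 - (if z ∈ maxSet ω then (1 : ℝ) / ((maxSet ω).card : ℝ) else 0)) ≤
        ∑ j ∈ Finset.univ.erase z, ∏ i, p (ω i) * w j (ω i) := by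
      intro ω _
      have hterm_nn : ∀ j ∈ Finset.univ.erase z, (0:ℝ) ≤ ∏ i, p (ω i) * w j (ω i) :=
        fun j _ => Finset.prod_nonneg fun i _ => mul_nonneg (hnn _) (hwpos _ _).le
      have hp : 0 ≤ ∏ i, p (ω i) := Finset.prod_nonneg fun i _ => hnn _
      by_cases hcase : ∀ j, j ≠ z → count ω j < count ω z
      · -- z is the strict winner: the weight is exactly 1
        have hmax : maxSet ω = {z} := by
          ext j
          simp only [maxSet, Finset.mem_filter, Finset.mem_univ, true_and,
            Finset.mem_singleton]
          constructor
          · intro hj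
            by_contra hjz
            exact absurd (hj z) (not_le.2 (hcase j hjz))
          · rintro rfl k
            rcases eq_or_ne k z with rfl | hk
            · exact le_refl _
            · exact (hcase k hk).le
        rw [hmax]
        have e : (if z ∈ ({z} : Finset (Fin m)) then
            (1 : ℝ) / ((({z} : Finset (Fin m)).card : ℝ)) else 0) = 1 := by simp
        rw [e, sub_self, mul_zero]
        exact Finset.sum_nonneg hterm_nn
      · push_neg at hcase
        obtain ⟨j, hjz, hjc⟩ := hcase
        have hwt0 : 0 ≤ (if z ∈ maxSet ω then (1 : ℝ) / ((maxSet ω).card : ℝ) else 0) := by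
          split_ifs
          · positivity
          · exact le_refl _
        have hLHS : (∏ i, p (ω i)) *
            (1 - (if z ∈ maxSet ω then (1 : ℝ) / ((maxSet ω).card : ℝ) else 0)) ≤
            ∏ i, p (ω i) := by
          nlinarith [hwt0, hp]
        have hwprod : (1:ℝ) ≤ ∏ i, w j (ω i) := by
          rw [prod_comp_count]
          have hsub : ∏ k ∈ ({z, j} : Finset (Fin m)), w j k ^ count ω k =
              ∏ k, w j k ^ count ω k :=
            Finset.prod_subset (Finset.subset_univ _) (fun k _ hk => by
              simp only [Finset.mem_insert, Finset.mem_singleton, not_or] at hk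
              simp [hw, hk.1, hk.2])
          have hpair : ∏ k, w j k ^ count ω k =
              t j ^ count ω z * ((t j)⁻¹) ^ count ω j := by
            rw [← hsub, Finset.prod_pair (show z ≠ j from Ne.symm hjz)]
            simp [hw, hjz]
          have h3 : t j ^ count ω j ≤ t j ^ count ω z :=
            pow_le_pow_of_le_one (htpos j).le (htlt j hjz).le hjc
          calc (1:ℝ) = t j ^ count ω j * ((t j)⁻¹) ^ count ω j := by
                rw [← mul_pow, mul_inv_cancel₀ (htpos j).ne', one_pow]
            _ ≤ t j ^ count ω z * ((t j)⁻¹) ^ count ω j :=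
                mul_le_mul_of_nonneg_right h3 (pow_nonneg (inv_pos.2 (htpos j)).le _)
            _ = ∏ k, w j k ^ count ω k := hpair.symm
        have hmid : (∏ i, p (ω i)) ≤ ∏ i, p (ω i) * w j (ω i) := by
          rw [Finset.prod_mul_distrib]
          exact le_mul_of_one_le_right hp hwprod
        have hsingle := Finset.single_le_sum (f := fun j => ∏ i, p (ω i) * w j (ω i))
          hterm_nn (Finset.mem_erase.2 ⟨hjz, Finset.mem_univ j⟩)
        linarith
    calc 1 - majorityProb p N z
        ≤ ∑ ω : Fin N → Fin m, ∑ j ∈ Finset.univ.erase z, ∏ i, p (ω i) * w j (ω i) := by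
          rw [h1]; exact Finset.sum_le_sum pointwise
      _ = ∑ j ∈ Finset.univ.erase z, ∑ ω : Fin N → Fin m, ∏ i, p (ω i) * w j (ω i) :=
          Finset.sum_comm
      _ = ∑ j ∈ Finset.univ.erase z, c j ^ N := by
          refine Finset.sum_congr rfl fun j _ => ?_
          rw [hcval j]
          exact sum_prod_eq_pow (fun k => p k * w j k)
  -- conclude by squeezing
  have hlim : Tendsto (fun N => ∑ j ∈ Finset.univ.erase z, c j ^ N) atTop (nhds 0) := by
    have h := tendsto_finset_sum (Finset.univ.erase z) (fun j hj =>
      tendsto_pow_atTop_nhds_zero_of_lt_one (hcnn j) (hclt j (Finset.mem_erase.1 hj).1))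
    simpa using h
  have hlow : Tendsto (fun N => 1 - ∑ j ∈ Finset.univ.erase z, c j ^ N) atTop (nhds 1) := by
    have := (tendsto_const_nhds (x := (1:ℝ)) (f := atTop)).sub hlim
    simpa using this
  exact tendsto_of_tendsto_of_tendsto_of_le_of_le hlow tendsto_const_nhds
    (fun N => by linarith [hmain N]) (fun N => hub N)
end

section
/- If p_1 > p_j for every j ≠ 1 (an 'easy question'), then the majority-vote success probability Pr(a_1 | p; N) is non-decreasing as a function of the sample size N. -/
open Finset Filter

variable {m N : ℕ}

lemma mem_maxSet {ω : Fin N → Fin m} {j : Fin m} :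
    j ∈ maxSet ω ↔ ∀ k, count ω k ≤ count ω j := by
  simp [maxSet]

lemma maxSet_nonempty (hm : 0 < m) (ω : Fin N → Fin m) : (maxSet ω).Nonempty := by
  obtain ⟨j, -, hj⟩ := Finset.exists_max_image Finset.univ (count ω)
    ⟨⟨0, hm⟩, Finset.mem_univ _⟩
  exact ⟨j, mem_maxSet.2 fun k => hj k (Finset.mem_univ k)⟩

lemma count_cons (x : Fin m) (ω : Fin N → Fin m) (j : Fin m) :
    count (Fin.cons x ω) j = count ω j + if x = j then 1 else 0 := by
  simp only [count, Finset.card_filter]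
  rw [Fin.sum_univ_succ]
  simp [add_comm]

lemma prod_eq_prod_pow (p : Fin m → ℝ) (ω : Fin N → Fin m) :
    ∏ i, p (ω i) = ∏ j, p j ^ count ω j := by
  rw [Finset.prod_comp p ω]
  rw [← Finset.prod_subset (Finset.subset_univ (Finset.univ.image ω))]
  · rfl
  · intro j _ hj
    have : count ω j = 0 := by
      simp only [count, Finset.card_eq_zero, Finset.filter_eq_empty_iff]
      intro i _ h
      exact hj (Finset.mem_image.2 ⟨i, Finset.mem_univ i, h⟩)
    simp [count] at this ⊢
    simp [this]

lemma count_swap (a b : Fin m) (ω : Fin N → Fin m) (j : Fin m) :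
    count (Equiv.swap a b ∘ ω) j = count ω (Equiv.swap a b j) := by
  simp only [count]
  congr 1
  ext i
  simp [Equiv.swap_apply_eq_iff]

lemma mem_maxSet_swap {a b : Fin m} {ω : Fin N → Fin m} {j : Fin m} :
    j ∈ maxSet (Equiv.swap a b ∘ ω) ↔ Equiv.swap a b j ∈ maxSet ω := by
  simp only [mem_maxSet, count_swap]
  constructor
  · intro h k
    simpa using h (Equiv.swap a b k)
  · intro h k
    exact h _

lemma maxSet_swap (a b : Fin m) (ω : Fin N → Fin m) :
    maxSet (Equiv.swap a b ∘ ω) = (maxSet ω).image (Equiv.swap a b) := by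
  ext j
  rw [mem_maxSet_swap]
  constructor
  · intro h
    exact Finset.mem_image.2 ⟨Equiv.swap a b j, h, by simp⟩
  · rintro h
    obtain ⟨k, hk, rfl⟩ := Finset.mem_image.1 h
    simpa using hk

lemma card_maxSet_swap (a b : Fin m) (ω : Fin N → Fin m) :
    (maxSet (Equiv.swap a b ∘ ω)).card = (maxSet ω).card := by
  rw [maxSet_swap, Finset.card_image_of_injective _ (Equiv.injective _)]

lemma maxSet_cons_mem {x : Fin m} {ω : Fin N → Fin m} (hx : x ∈ maxSet ω) :
    maxSet (Fin.cons x ω) = {x} := by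
  ext j
  simp only [mem_maxSet, count_cons, Finset.mem_singleton]
  rw [mem_maxSet] at hx
  constructor
  · intro h
    by_contra hne
    have h1 := h x
    have h2 := hx j
    rw [if_pos rfl, if_neg (fun h => hne (by rw [h]))] at h1
    omega
  · rintro rfl k
    have := hx k
    split_ifs <;> omega

lemma maxSet_cons_near {x : Fin m} {ω : Fin N → Fin m} (hx : x ∉ maxSet ω)
    (hnear : ∀ k, count ω k ≤ count ω x + 1) :
    maxSet (Fin.cons x ω) = insert x (maxSet ω) := by
  have hlt : ∃ k, count ω x < count ω k := by
    by_contra h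
    push_neg at h
    exact hx (mem_maxSet.2 h)
  obtain ⟨k0, hk0⟩ := hlt
  ext j
  simp only [mem_maxSet, count_cons, Finset.mem_insert]
  constructor
  · intro h
    by_cases hj : j = x
    · exact Or.inl hj
    · refine Or.inr fun k => ?_
      have h1 := h k
      have h2 := h x
      rw [if_pos rfl, if_neg (fun hh => hj (by rw [hh]))] at h2
      by_cases hk : x = k
      · subst hk; omega
      · rw [if_neg hk, if_neg (fun hh => hj (by rw [hh]))] at h1
        omega
  · rintro (rfl | hj)
    · intro k
      have := hnear k
      rw [if_pos rfl]
      split_ifs with h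
      · subst h; omega
      · omega
    · intro k
      have hj1 := hj k
      have hj2 := hj k0
      have hjx : x ≠ j := by
        rintro rfl
        omega
      rw [if_neg hjx]
      split_ifs with h
      · subst h; omega
      · omega

lemma maxSet_cons_far {x : Fin m} {ω : Fin N → Fin m}
    (hfar : ¬ ∀ k, count ω k ≤ count ω x + 1) :
    maxSet (Fin.cons x ω) = maxSet ω := by
  push_neg at hfar
  obtain ⟨k0, hk0⟩ := hfar
  ext j
  simp only [mem_maxSet, count_cons]
  constructor
  · intro h k
    have h1 := h k
    have h2 := h k0
    have hjx : x ≠ j := by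
      rintro rfl
      rw [if_pos rfl] at h2
      split_ifs at h2 <;> omega
    rw [if_neg hjx] at h1 h2
    by_cases hk : x = k
    · subst hk; rw [if_pos rfl] at h1; omega
    · rw [if_neg hk] at h1; omega
  · intro hj k
    have h1 := hj k
    have h2 := hj k0
    have hjx : x ≠ j := by
      rintro rfl
      omega
    rw [if_neg hjx]
    split_ifs with hk
    · subst hk; omega
    · omega

lemma weight_swap (p : Fin m → ℝ) {a b : Fin m} (hab : a ≠ b) {ω : Fin N → Fin m}
    (h : count ω a = count ω b + 1) :
    (∏ i, p (Equiv.swap a b (ω i))) * p a = (∏ i, p (ω i)) * p b := by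
  have h1 : ∏ i, p (Equiv.swap a b (ω i)) = ∏ j, p (Equiv.swap a b j) ^ count ω j := by
    rw [show (fun i => p (Equiv.swap a b (ω i))) = fun i => p ((Equiv.swap a b ∘ ω) i) from rfl]
    rw [prod_eq_prod_pow (fun j => p j) (Equiv.swap a b ∘ ω)]
    rw [← Equiv.prod_comp (Equiv.swap a b)
      (fun j => p j ^ count (Equiv.swap a b ∘ ω) j)]
    refine Finset.prod_congr rfl fun j _ => ?_
    rw [count_swap]
    simp
  rw [h1, prod_eq_prod_pow]
  rw [← Finset.prod_erase_mul _ _ (Finset.mem_univ a),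
      ← Finset.prod_erase_mul _ _ (Finset.mem_univ a)]
  have hb : b ∈ Finset.univ.erase a := by simp [hab.symm, Ne.symm]
  rw [← Finset.prod_erase_mul _ _ hb, ← Finset.prod_erase_mul _ _ hb]
  have key : ∀ j ∈ (Finset.univ.erase a).erase b, p (Equiv.swap a b j) = p j := by
    intro j hj
    simp only [Finset.mem_erase] at hj
    rw [Equiv.swap_apply_of_ne_of_ne hj.2.1 hj.1]
  rw [Finset.prod_congr rfl fun j hj => by rw [key j hj]]
  rw [Equiv.swap_apply_left, Equiv.swap_apply_right, h]
  ring

noncomputable def fval {m N : ℕ} (l : Fin m) (ω : Fin N → Fin m) : ℝ :=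
  if l ∈ maxSet ω then 1 / ((maxSet ω).card : ℝ) else 0

noncomputable def wt {m N : ℕ} (p : Fin m → ℝ) (ω : Fin N → Fin m) : ℝ := ∏ i, p (ω i)

noncomputable def t1 {m N : ℕ} (p : Fin m → ℝ) (l : Fin m) (ω : Fin N → Fin m) (x : Fin m) : ℝ :=
  if l ∈ maxSet ω ∧ x ∈ maxSet ω then
    p x * wt p ω * ((if x = l then (1:ℝ) else 0) - 1 / ((maxSet ω).card : ℝ)) else 0

noncomputable def t2 {m N : ℕ} (p : Fin m → ℝ) (l : Fin m) (ω : Fin N → Fin m) (x : Fin m) : ℝ :=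
  if l ∈ maxSet ω ∧ x ∉ maxSet ω ∧ (∀ k, count ω k ≤ count ω x + 1) then
    -(p x * wt p ω / (((maxSet ω).card : ℝ) * (((maxSet ω).card : ℝ) + 1))) else 0

noncomputable def t3 {m N : ℕ} (p : Fin m → ℝ) (l : Fin m) (ω : Fin N → Fin m) (x : Fin m) : ℝ :=
  if (l ∉ maxSet ω ∧ (∀ k, count ω k ≤ count ω l + 1)) ∧ x = l then
    p l * wt p ω / (((maxSet ω).card : ℝ) + 1) else 0

lemma majority_eq (p : Fin m → ℝ) (l : Fin m) :
    majorityProb p N l = ∑ ω : Fin N → Fin m, wt p ω * fval l ω := rfl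

lemma majority_succ (p : Fin m → ℝ) (l : Fin m) :
    majorityProb p (N+1) l
      = ∑ ω : Fin N → Fin m, ∑ x : Fin m, p x * wt p ω * fval l (Fin.cons x ω) := by
  rw [majority_eq]
  rw [← Equiv.sum_comp (Fin.consEquiv (fun _ => Fin m))
    (fun ω => wt p ω * fval l ω)]
  rw [Fintype.sum_prod_type]
  rw [Finset.sum_comm]
  refine Finset.sum_congr rfl fun ω _ => Finset.sum_congr rfl fun x _ => ?_
  have : wt p (Fin.cons x ω) = p x * wt p ω := by
    simp only [wt, Fin.prod_univ_succ, Fin.cons_zero, Fin.cons_succ]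
  rw [show (Fin.consEquiv (fun _ => Fin m)) (x, ω) = Fin.cons x ω from rfl, this, mul_assoc]

lemma card_pos_real (hm : 0 < m) (ω : Fin N → Fin m) :
    (1 : ℝ) ≤ ((maxSet ω).card : ℝ) := by
  have := Finset.card_pos.2 (maxSet_nonempty hm ω)
  exact_mod_cast this

lemma t1_eq {p : Fin m → ℝ} {l : Fin m} {ω : Fin N → Fin m} {x : Fin m}
    (hl : l ∈ maxSet ω) (hx : x ∈ maxSet ω) :
    t1 p l ω x = p x * wt p ω * ((if x = l then (1:ℝ) else 0) - 1 / ((maxSet ω).card : ℝ)) := by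
  rw [t1, if_pos ⟨hl, hx⟩]

lemma t1_zero {p : Fin m → ℝ} {l : Fin m} {ω : Fin N → Fin m} {x : Fin m}
    (h : ¬ (l ∈ maxSet ω ∧ x ∈ maxSet ω)) : t1 p l ω x = 0 := by
  rw [t1, if_neg h]

lemma t2_eq {p : Fin m → ℝ} {l : Fin m} {ω : Fin N → Fin m} {x : Fin m}
    (hl : l ∈ maxSet ω) (hx : x ∉ maxSet ω) (hnear : ∀ k, count ω k ≤ count ω x + 1) :
    t2 p l ω x = -(p x * wt p ω / (((maxSet ω).card : ℝ) * (((maxSet ω).card : ℝ) + 1))) := by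
  rw [t2, if_pos ⟨hl, hx, hnear⟩]

lemma t2_zero {p : Fin m → ℝ} {l : Fin m} {ω : Fin N → Fin m} {x : Fin m}
    (h : ¬ (l ∈ maxSet ω ∧ x ∉ maxSet ω ∧ (∀ k, count ω k ≤ count ω x + 1))) :
    t2 p l ω x = 0 := by
  rw [t2, if_neg h]

lemma t3_eq {p : Fin m → ℝ} {l : Fin m} {ω : Fin N → Fin m}
    (hl : l ∉ maxSet ω) (hnear : ∀ k, count ω k ≤ count ω l + 1) :
    t3 p l ω l = p l * wt p ω / (((maxSet ω).card : ℝ) + 1) := by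
  rw [t3, if_pos ⟨⟨hl, hnear⟩, rfl⟩]

lemma t3_zero {p : Fin m → ℝ} {l : Fin m} {ω : Fin N → Fin m} {x : Fin m}
    (h : ¬ ((l ∉ maxSet ω ∧ (∀ k, count ω k ≤ count ω l + 1)) ∧ x = l)) :
    t3 p l ω x = 0 := by
  rw [t3, if_neg h]

lemma step_eq (hm : 0 < m) (p : Fin m → ℝ) (l : Fin m) (ω : Fin N → Fin m) (x : Fin m) :
    p x * wt p ω * (fval l (Fin.cons x ω) - fval l ω)
      = t1 p l ω x + t2 p l ω x + t3 p l ω x := by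
  have hs1 : (1 : ℝ) ≤ ((maxSet ω).card : ℝ) := card_pos_real hm ω
  have hs0 : ((maxSet ω).card : ℝ) ≠ 0 := by linarith
  have hs0' : ((maxSet ω).card : ℝ) + 1 ≠ 0 := by linarith
  have key : (1:ℝ)/(((maxSet ω).card : ℝ)+1) - 1/((maxSet ω).card : ℝ)
      = -(1/(((maxSet ω).card : ℝ)*(((maxSet ω).card : ℝ)+1))) := by
    field_simp
    ring
  by_cases hl : l ∈ maxSet ω
  · by_cases hx : x ∈ maxSet ω
    · -- case 1 : t1
      rw [t1_eq hl hx, t2_zero (fun h => h.2.1 hx), t3_zero (fun h => h.1.1 hl)]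
      have h1 : fval l (Fin.cons x ω) = if x = l then (1:ℝ) else 0 := by
        rw [fval, maxSet_cons_mem hx]
        simp only [Finset.mem_singleton, Finset.card_singleton, Nat.cast_one, div_one]
        by_cases h : x = l
        · simp [h]
        · rw [if_neg (fun hh => h hh.symm), if_neg h]
      rw [h1, fval, if_pos hl]
      ring
    · by_cases hnear : ∀ k, count ω k ≤ count ω x + 1
      · -- case 2 : t2
        rw [t1_zero (fun h => hx h.2), t2_eq hl hx hnear, t3_zero (fun h => h.1.1 hl)]
        have h1 : fval l (Fin.cons x ω)
            = 1 / (((maxSet ω).card : ℝ) + 1) := by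
          rw [fval, maxSet_cons_near hx hnear,
            if_pos (Finset.mem_insert_of_mem hl), Finset.card_insert_of_notMem hx]
          push_cast
          ring_nf
        rw [h1, fval, if_pos hl]
        rw [show p x * wt p ω * (1 / (((maxSet ω).card : ℝ) + 1) - 1 / ((maxSet ω).card : ℝ))
          = p x * wt p ω * ((1:ℝ)/(((maxSet ω).card : ℝ)+1) - 1/((maxSet ω).card : ℝ)) from rfl, key]
        ring
      · -- case 3 : zero
        rw [t1_zero (fun h => hx h.2), t2_zero (fun h => hnear h.2.2),
          t3_zero (fun h => h.1.1 hl)]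
        rw [fval, fval, maxSet_cons_far hnear, if_pos hl]
        ring
  · have hfω : fval l ω = 0 := by rw [fval, if_neg hl]
    rw [t1_zero (fun h => hl h.1), t2_zero (fun h => hl h.1)]
    by_cases hxl : x = l
    · subst hxl
      by_cases hnear : ∀ k, count ω k ≤ count ω x + 1
      · rw [t3_eq hl hnear]
        have h1 : fval x (Fin.cons x ω) = 1 / (((maxSet ω).card : ℝ) + 1) := by
          rw [fval, maxSet_cons_near hl hnear, if_pos (Finset.mem_insert_self _ _),
            Finset.card_insert_of_notMem hl]
          push_cast
          ring_nf
        rw [h1, hfω]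
        ring
      · rw [t3_zero (fun h => hnear h.1.2)]
        rw [fval, maxSet_cons_far hnear, if_neg hl, hfω]
        ring
    · rw [t3_zero (fun h => hxl h.2)]
      have h1 : fval l (Fin.cons x ω) = 0 := by
        by_cases hx : x ∈ maxSet ω
        · rw [fval, maxSet_cons_mem hx, if_neg (by
            simp only [Finset.mem_singleton]
            exact fun h => hxl h.symm)]
        · by_cases hnear : ∀ k, count ω k ≤ count ω x + 1
          · rw [fval, maxSet_cons_near hx hnear, if_neg (by
              simp only [Finset.mem_insert]
              push_neg
              exact ⟨fun h => hxl h.symm, hl⟩)]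
          · rw [fval, maxSet_cons_far hnear, if_neg hl]
      rw [h1, hfω]
      ring

lemma wt_nonneg (p : Fin m → ℝ) (hnn : ∀ j, 0 ≤ p j) (ω : Fin N → Fin m) :
    0 ≤ wt p ω :=
  Finset.prod_nonneg fun i _ => hnn _

lemma sum_t1_nonneg (hm : 0 < m) (p : Fin m → ℝ) (hnn : ∀ j, 0 ≤ p j) (l : Fin m)
    (hple : ∀ j, p j ≤ p l) :
    (0:ℝ) ≤ ∑ ω : Fin N → Fin m, ∑ x, t1 p l ω x := by
  refine Finset.sum_nonneg fun ω _ => ?_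
  by_cases hl : l ∈ maxSet ω
  · have e0 : ∀ x : Fin m, t1 p l ω x
        = if x ∈ maxSet ω then
            p x * wt p ω * ((if x = l then (1:ℝ) else 0) - 1 / ((maxSet ω).card : ℝ))
          else 0 := by
      intro x
      by_cases hx : x ∈ maxSet ω
      · rw [t1, if_pos ⟨hl, hx⟩, if_pos hx]
      · rw [t1, if_neg (fun h => hx h.2), if_neg hx]
    rw [Finset.sum_congr rfl fun x _ => e0 x, Finset.sum_ite_mem, Finset.univ_inter]
    have hs1 : (1 : ℝ) ≤ ((maxSet ω).card : ℝ) := card_pos_real hm ω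
    have hspos : (0:ℝ) < ((maxSet ω).card : ℝ) := by linarith
    have factor : ∑ x ∈ maxSet ω,
        p x * wt p ω * ((if x = l then (1:ℝ) else 0) - 1 / ((maxSet ω).card : ℝ))
        = wt p ω * ∑ x ∈ maxSet ω,
            p x * ((if x = l then (1:ℝ) else 0) - 1 / ((maxSet ω).card : ℝ)) := by
      rw [Finset.mul_sum]
      exact Finset.sum_congr rfl fun x _ => by ring
    rw [factor]
    refine mul_nonneg (wt_nonneg p hnn ω) ?_
    have split : ∑ x ∈ maxSet ω,
        p x * ((if x = l then (1:ℝ) else 0) - 1 / ((maxSet ω).card : ℝ))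
        = (∑ x ∈ maxSet ω, if x = l then p x else 0)
          - (∑ x ∈ maxSet ω, p x) / ((maxSet ω).card : ℝ) := by
      rw [Finset.sum_div, ← Finset.sum_sub_distrib]
      refine Finset.sum_congr rfl fun x _ => ?_
      by_cases h : x = l
      · rw [if_pos h, if_pos h]
        ring
      · rw [if_neg h, if_neg h]
        ring
    rw [split, Finset.sum_ite_eq' (maxSet ω) l p, if_pos hl, sub_nonneg, div_le_iff₀ hspos]
    have := Finset.sum_le_card_nsmul (maxSet ω) p (p l) (fun x _ => hple x)
    rw [nsmul_eq_mul] at this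
    linarith [this]
  · have e0 : ∀ x : Fin m, t1 p l ω x = 0 := fun x => by
      rw [t1, if_neg (fun h => hl h.1)]
    rw [Finset.sum_congr rfl fun x _ => e0 x]
    simp

lemma sum_t2_t3 (hm : 0 < m) (p : Fin m → ℝ) (l : Fin m) :
    (∑ ω : Fin N → Fin m, ∑ x, t2 p l ω x) + (∑ ω : Fin N → Fin m, ∑ x, t3 p l ω x) = 0 := by
  classical
  set A : Finset ((Fin N → Fin m) × Fin m) :=
    Finset.univ.filter (fun q => l ∈ maxSet q.1 ∧ q.2 ∉ maxSet q.1 ∧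
      ∀ k, count q.1 k ≤ count q.1 q.2 + 1) with hA
  set B : Finset ((Fin N → Fin m) × Fin m) :=
    Finset.univ.filter (fun q => (l ∉ maxSet q.1 ∧ ∀ k, count q.1 k ≤ count q.1 l + 1) ∧
      q.2 ∈ maxSet q.1) with hB
  have claim1 : (∑ ω : Fin N → Fin m, ∑ x, t2 p l ω x)
      = -∑ q ∈ A, p q.2 * wt p q.1 /
          (((maxSet q.1).card : ℝ) * (((maxSet q.1).card : ℝ) + 1)) := by
    rw [show -∑ q ∈ A, p q.2 * wt p q.1 /
          (((maxSet q.1).card : ℝ) * (((maxSet q.1).card : ℝ) + 1))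
        = ∑ q ∈ A, -(p q.2 * wt p q.1 /
          (((maxSet q.1).card : ℝ) * (((maxSet q.1).card : ℝ) + 1))) by
      rw [Finset.sum_neg_distrib]]
    rw [hA, Finset.sum_filter, Fintype.sum_prod_type]
    rfl
  have claim2 : (∑ ω : Fin N → Fin m, ∑ x, t3 p l ω x)
      = ∑ q ∈ B, p l * wt p q.1 /
          (((maxSet q.1).card : ℝ) * (((maxSet q.1).card : ℝ) + 1)) := by
    have per : ∀ ω : Fin N → Fin m, ∑ x, t3 p l ω x
        = ∑ x, (if ((l ∉ maxSet ω ∧ ∀ k, count ω k ≤ count ω l + 1) ∧ x ∈ maxSet ω) then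
            p l * wt p ω / (((maxSet ω).card : ℝ) * (((maxSet ω).card : ℝ) + 1)) else 0) := by
      intro ω
      by_cases hC : l ∉ maxSet ω ∧ ∀ k, count ω k ≤ count ω l + 1
      · have lhs : ∑ x, t3 p l ω x = p l * wt p ω / (((maxSet ω).card : ℝ) + 1) := by
          rw [Finset.sum_eq_single l]
          · rw [t3, if_pos ⟨hC, rfl⟩]
          · intro x _ hx
            rw [t3, if_neg (fun h => hx h.2)]
          · intro h
            exact absurd (Finset.mem_univ l) h
        have hs1 : (1 : ℝ) ≤ ((maxSet ω).card : ℝ) := card_pos_real hm ω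
        have hs0 : ((maxSet ω).card : ℝ) ≠ 0 := by linarith
        have hs0' : ((maxSet ω).card : ℝ) + 1 ≠ 0 := by linarith
        have e : ∀ x : Fin m, (if ((l ∉ maxSet ω ∧ ∀ k, count ω k ≤ count ω l + 1)
              ∧ x ∈ maxSet ω) then
            p l * wt p ω / (((maxSet ω).card : ℝ) * (((maxSet ω).card : ℝ) + 1)) else 0)
            = if x ∈ maxSet ω then
            p l * wt p ω / (((maxSet ω).card : ℝ) * (((maxSet ω).card : ℝ) + 1)) else 0 := by
          intro x
          by_cases hx : x ∈ maxSet ω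
          · rw [if_pos ⟨hC, hx⟩, if_pos hx]
          · rw [if_neg (fun h => hx h.2), if_neg hx]
        rw [lhs, Finset.sum_congr rfl fun x _ => e x, Finset.sum_ite_mem,
          Finset.univ_inter, Finset.sum_const, nsmul_eq_mul]
        field_simp
      · have lhs : ∀ x, t3 p l ω x = 0 := fun x => by
          rw [t3, if_neg (fun h => hC h.1)]
        trans (0:ℝ)
        · rw [Finset.sum_congr rfl fun x _ => lhs x, Finset.sum_const, smul_zero]
        · symm
          rw [Finset.sum_congr rfl fun x _ => if_neg (fun h : _ ∧ _ => hC h.1),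
            Finset.sum_const, smul_zero]
    rw [Finset.sum_congr rfl fun ω _ => per ω, hB, Finset.sum_filter,
      Fintype.sum_prod_type]
  rw [claim1, claim2, neg_add_eq_zero]
  refine Finset.sum_nbij' (fun q => (Equiv.swap l q.2 ∘ q.1, q.2))
    (fun q => (Equiv.swap l q.2 ∘ q.1, q.2)) ?_ ?_ ?_ ?_ ?_
  · rintro ⟨ω, x⟩ hq
    rw [hA, Finset.mem_filter] at hq
    obtain ⟨-, hl, hx, hnear⟩ := hq
    rw [hB, Finset.mem_filter]
    refine ⟨Finset.mem_univ _, ⟨?_, ?_⟩, ?_⟩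
    · rw [mem_maxSet_swap, Equiv.swap_apply_left]
      exact hx
    · intro k
      simp only [count_swap, Equiv.swap_apply_left]
      exact hnear (Equiv.swap l x k)
    · show x ∈ maxSet (Equiv.swap l x ∘ ω)
      rw [mem_maxSet_swap, Equiv.swap_apply_right]
      exact hl
  · rintro ⟨ω, k⟩ hq
    rw [hB, Finset.mem_filter] at hq
    obtain ⟨-, ⟨hl, hnear⟩, hk⟩ := hq
    rw [hA, Finset.mem_filter]
    refine ⟨Finset.mem_univ _, ?_, ?_, ?_⟩
    · rw [mem_maxSet_swap, Equiv.swap_apply_left]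
      exact hk
    · show ¬ k ∈ maxSet (Equiv.swap l k ∘ ω)
      rw [mem_maxSet_swap, Equiv.swap_apply_right]
      exact hl
    · intro j
      simp only [count_swap, Equiv.swap_apply_right]
      exact hnear (Equiv.swap l k j)
  · rintro ⟨ω, x⟩ _
    refine Prod.ext ?_ rfl
    funext i
    exact Equiv.swap_apply_self _ _ _
  · rintro ⟨ω, k⟩ _
    refine Prod.ext ?_ rfl
    funext i
    exact Equiv.swap_apply_self _ _ _
  · rintro ⟨ω, x⟩ hq
    rw [hA, Finset.mem_filter] at hq
    obtain ⟨-, hl, hx, hnear⟩ := hq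
    have hne : l ≠ x := fun h => hx (h ▸ hl)
    have hcount : count ω l = count ω x + 1 := by
      have h1 : count ω x ≤ count ω l := mem_maxSet.1 hl x
      have h2 : count ω l ≤ count ω x + 1 := hnear l
      have h3 : count ω x ≠ count ω l := by
        intro h
        exact hx (mem_maxSet.2 fun k => h ▸ mem_maxSet.1 hl k)
      omega
    have hw : wt p (Equiv.swap l x ∘ ω) * p l = wt p ω * p x := by
      exact weight_swap p hne hcount
    have hcard : ((maxSet (Equiv.swap l x ∘ ω)).card : ℝ) = ((maxSet ω).card : ℝ) := by
      rw [card_maxSet_swap]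
    show p x * wt p ω / (((maxSet ω).card : ℝ) * (((maxSet ω).card : ℝ) + 1))
      = p l * wt p (Equiv.swap l x ∘ ω) /
          (((maxSet (Equiv.swap l x ∘ ω)).card : ℝ) * (((maxSet (Equiv.swap l x ∘ ω)).card : ℝ) + 1))
    rw [hcard]
    rw [show p l * wt p (Equiv.swap l x ∘ ω) = wt p (Equiv.swap l x ∘ ω) * p l by ring, hw]
    ring


/-- For an easy question (`a_1` is the unique most likely answer),
the majority-vote success probability is non-decreasing in the sample size `N`. -/
theorem easy_question_monotone {m : ℕ} (hm : 0 < m) (p : Fin m → ℝ)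
    (hnn : ∀ j, 0 ≤ p j) (hsum : ∑ j, p j = 1)
    (heasy : ∀ j, j ≠ (⟨0, hm⟩ : Fin m) → p j < p ⟨0, hm⟩) :
    Monotone (fun N => majorityProb p N ⟨0, hm⟩) := by
  set l : Fin m := ⟨0, hm⟩ with hldef
  have hple : ∀ j, p j ≤ p l := fun j => by
    by_cases h : j = l
    · rw [h]
    · exact (heasy j h).le
  refine monotone_nat_of_le_succ fun N => ?_
  have h2 : ∀ ω : Fin N → Fin m, ∑ x : Fin m, p x * wt p ω * (fval l (Fin.cons x ω) - fval l ω)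
      = (∑ x : Fin m, p x * wt p ω * fval l (Fin.cons x ω)) - wt p ω * fval l ω := by
    intro ω
    rw [show wt p ω * fval l ω = ∑ x : Fin m, p x * (wt p ω * fval l ω) by
      rw [← Finset.sum_mul, hsum, one_mul]]
    rw [← Finset.sum_sub_distrib]
    exact Finset.sum_congr rfl fun x _ => by ring
  have key : majorityProb p (N+1) l - majorityProb p N l
      = (∑ ω : Fin N → Fin m, ∑ x : Fin m, t1 p l ω x)
        + ((∑ ω : Fin N → Fin m, ∑ x : Fin m, t2 p l ω x)
          + (∑ ω : Fin N → Fin m, ∑ x : Fin m, t3 p l ω x)) := by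
    rw [majority_succ, majority_eq, ← Finset.sum_sub_distrib]
    rw [Finset.sum_congr rfl fun ω _ => (h2 ω).symm]
    rw [Finset.sum_congr rfl fun ω _ =>
      (Finset.sum_congr rfl fun x _ => step_eq hm p l ω x)]
    rw [Finset.sum_congr rfl fun ω _ => Finset.sum_add_distrib]
    rw [Finset.sum_add_distrib]
    rw [Finset.sum_congr rfl fun ω (_ : ω ∈ Finset.univ) =>
      (Finset.sum_add_distrib : ∑ x : Fin m, (t1 p l ω x + t2 p l ω x) = _)]
    rw [Finset.sum_add_distrib, add_assoc]
  have ht23 := sum_t2_t3 (N := N) hm p l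
  have ht1 := sum_t1_nonneg (N := N) hm p hnn l hple
  have : 0 ≤ majorityProb p (N+1) l - majorityProb p N l := by
    rw [key, ht23, add_zero]
    exact ht1
  simpa using sub_nonneg.1 this
end

section
/- Let p_max = max_j p_j and S = {j : p_j = p_max}. If 1 ∈ S and |S| > 1 (a 'moderate question'), then the majority-vote success probability Pr(a_1 | p; N) is non-decreasing as a function of the sample size N. -/
open Finset Filter

namespace MQ

variable {m : ℕ}

lemma mem_maxSet {N : ℕ} {ω : Fin N → Fin m} {j : Fin m} :
    j ∈ maxSet ω ↔ ∀ k, count ω k ≤ count ω j := by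
  simp [maxSet]

lemma maxSet_nonempty (hm : 0 < m) {N : ℕ} (ω : Fin N → Fin m) : (maxSet ω).Nonempty := by
  have : Nonempty (Fin m) := ⟨⟨0, hm⟩⟩
  obtain ⟨j, -, hj⟩ := Finset.exists_max_image Finset.univ (count ω) Finset.univ_nonempty
  exact ⟨j, mem_maxSet.2 fun k => hj k (mem_univ k)⟩

lemma count_comp_swap {N : ℕ} (u x : Fin m) (ω : Fin N → Fin m) (k : Fin m) :
    count (⇑(Equiv.swap u x) ∘ ω) k = count ω (Equiv.swap u x k) := by
  unfold count
  congr 1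
  apply Finset.filter_congr
  intro i _
  simp only [Function.comp_apply]
  constructor
  · rintro rfl; rw [Equiv.swap_apply_self]
  · intro h; rw [h, Equiv.swap_apply_self]

lemma maxSet_comp_swap {N : ℕ} (u x : Fin m) (ω : Fin N → Fin m) :
    maxSet (⇑(Equiv.swap u x) ∘ ω) = (maxSet ω).image (Equiv.swap u x) := by
  ext j
  rw [mem_maxSet]
  simp only [count_comp_swap]
  constructor
  · intro h
    refine Finset.mem_image.2 ⟨Equiv.swap u x j, mem_maxSet.2 fun k => ?_, Equiv.swap_apply_self _ _ _⟩
    have := h (Equiv.swap u x k)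
    rwa [Equiv.swap_apply_self] at this
  · intro h k
    obtain ⟨a, ha, rfl⟩ := Finset.mem_image.1 h
    rw [Equiv.swap_apply_self]
    exact mem_maxSet.1 ha _

/-- the tier set : top element together with all answers whose count is one less -/
def tier {N : ℕ} (ω : Fin N → Fin m) (k0 : Fin m) : Finset (Fin m) :=
  Finset.univ.filter fun k => k = k0 ∨ count ω k + 1 = count ω k0

lemma mem_tier {N : ℕ} {ω : Fin N → Fin m} {k0 k : Fin m} :
    k ∈ tier ω k0 ↔ k = k0 ∨ count ω k + 1 = count ω k0 := by simp [tier]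

lemma tier_comp_swap {N : ℕ} (u x : Fin m) (ω : Fin N → Fin m) (k0 : Fin m) :
    tier (⇑(Equiv.swap u x) ∘ ω) (Equiv.swap u x k0) = (tier ω k0).image (Equiv.swap u x) := by
  ext j
  rw [mem_tier]
  simp only [count_comp_swap, Equiv.swap_apply_self]
  constructor
  · intro h
    refine Finset.mem_image.2 ⟨Equiv.swap u x j, mem_tier.2 ?_, Equiv.swap_apply_self _ _ _⟩
    rcases h with h | h
    · left; rw [h, Equiv.swap_apply_self]
    · right; exact h
  · intro h
    obtain ⟨a, ha, rfl⟩ := Finset.mem_image.1 h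
    rw [Equiv.swap_apply_self]
    rcases mem_tier.1 ha with h | h
    · left; rw [h]
    · right; exact h

lemma prod_comp_eq_prod_pow {N : ℕ} (f : Fin m → ℝ) (ω : Fin N → Fin m) :
    ∏ i, f (ω i) = ∏ k, f k ^ count ω k := by
  rw [← Finset.prod_fiberwise_of_maps_to (t := Finset.univ) (g := ω)
      (fun i _ => mem_univ (ω i)) (fun i => f (ω i))]
  refine Finset.prod_congr rfl fun k _ => ?_
  rw [Finset.prod_congr rfl (fun i hi => by rw [(Finset.mem_filter.1 hi).2] :
    ∀ i ∈ Finset.univ.filter fun i => ω i = k, f (ω i) = f k), Finset.prod_const]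
  rfl

lemma sum_comp_count {N : ℕ} (F : Fin m → ℝ) (ω : Fin N → Fin m) :
    ∑ i, F (ω i) = ∑ k, (count ω k : ℝ) * F k := by
  rw [← Finset.sum_fiberwise_of_maps_to (t := Finset.univ) (g := ω)
      (fun i _ => mem_univ (ω i)) (fun i => F (ω i))]
  refine Finset.sum_congr rfl fun k _ => ?_
  rw [Finset.sum_congr rfl (fun i hi => by rw [(Finset.mem_filter.1 hi).2] :
    ∀ i ∈ Finset.univ.filter fun i => ω i = k, F (ω i) = F k), Finset.sum_const]
  rw [count, nsmul_eq_mul]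

lemma sum_count {N : ℕ} (ω : Fin N → Fin m) : ∑ k, count ω k = N := by
  have h := Finset.card_eq_sum_card_fiberwise (f := ω) (t := Finset.univ)
    (s := Finset.univ) (fun i _ => mem_univ (ω i))
  simpa [count] using h.symm

/-- the key product identity under swapping two values -/
lemma prod_swap_mul (p : Fin m → ℝ) {N : ℕ} (u x : Fin m) (hux : u ≠ x) (ω : Fin N → Fin m) :
    (∏ i, p (Equiv.swap u x (ω i))) * (p u ^ count ω u * p x ^ count ω x)
      = (∏ i, p (ω i)) * (p x ^ count ω u * p u ^ count ω x) := by
  have h1 : (∏ i, p (Equiv.swap u x (ω i))) = ∏ k, p k ^ count ω ((Equiv.swap u x) k) := by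
    rw [prod_comp_eq_prod_pow (fun k => p (Equiv.swap u x k)) ω]
    rw [← Equiv.prod_comp (Equiv.swap u x) (fun k => p k ^ count ω (Equiv.swap u x k))]
    refine Finset.prod_congr rfl fun k _ => ?_
    rw [Equiv.swap_apply_self]
  have hd : ∀ (c1 c2 : ℕ), p u ^ c1 * p x ^ c2 = ∏ k, p k ^ (if k = u then c1 else if k = x then c2 else 0) := by
    intro c1 c2
    rw [← Finset.prod_subset (Finset.subset_univ ({u, x} : Finset (Fin m)))
      (fun k _ hk => by
        simp only [Finset.mem_insert, Finset.mem_singleton, not_or] at hk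
        rw [if_neg hk.1, if_neg hk.2, pow_zero])]
    rw [Finset.prod_insert (by simpa using hux), Finset.prod_singleton]
    rw [if_pos rfl, if_neg (Ne.symm hux), if_pos rfl]
  rw [h1, prod_comp_eq_prod_pow p ω, hd,
    show p x ^ count ω u * p u ^ count ω x = p u ^ count ω x * p x ^ count ω u from mul_comm _ _,
    hd, ← Finset.prod_mul_distrib, ← Finset.prod_mul_distrib]
  refine Finset.prod_congr rfl fun k _ => ?_
  rw [← pow_add, ← pow_add]
  congr 1
  rcases eq_or_ne k u with rfl | hku
  · rw [if_pos rfl, if_pos rfl, Equiv.swap_apply_left]; exact Nat.add_comm _ _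
  rcases eq_or_ne k x with rfl | hkx
  · rw [if_neg hku, if_neg hku, if_pos rfl, if_pos rfl, Equiv.swap_apply_right]; exact Nat.add_comm _ _
  · rw [if_neg hku, if_neg hkx, if_neg hku, if_neg hkx,
      Equiv.swap_apply_of_ne_of_ne hku hkx]

end MQ

section Part2
namespace MQ
variable {m : ℕ}

lemma count_succAbove {N : ℕ} (ω : Fin (N+1) → Fin m) (i : Fin (N+1)) (k : Fin m) :
    count (ω ∘ i.succAbove) k + (if ω i = k then 1 else 0) = count ω k := by
  unfold count
  rw [Finset.card_filter, Finset.card_filter,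
    Fin.sum_univ_succAbove (fun i' => if ω i' = k then 1 else 0) i]
  simp only [Function.comp_apply]
  exact Nat.add_comm _ _

lemma count_del_le {N : ℕ} (ω : Fin (N+1) → Fin m) (i : Fin (N+1)) (k : Fin m) :
    count (ω ∘ i.succAbove) k ≤ count ω k := by
  have h := count_succAbove ω i k; split_ifs at h <;> omega

lemma count_del_eq {N : ℕ} (ω : Fin (N+1) → Fin m) (i : Fin (N+1)) {k : Fin m}
    (hne : ω i ≠ k) : count (ω ∘ i.succAbove) k = count ω k := by
  have h := count_succAbove ω i k; rw [if_neg hne] at h; omega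

lemma count_del_self {N : ℕ} (ω : Fin (N+1) → Fin m) (i : Fin (N+1)) :
    count (ω ∘ i.succAbove) (ω i) + 1 = count ω (ω i) := by
  have h := count_succAbove ω i (ω i); rw [if_pos rfl] at h; omega

lemma count_eq_of_mem_maxSet {N : ℕ} {ω : Fin N → Fin m} {j k : Fin m}
    (hj : j ∈ maxSet ω) (hk : k ∈ maxSet ω) : count ω j = count ω k :=
  le_antisymm (mem_maxSet.1 hk j) (mem_maxSet.1 hj k)

lemma maxSet_del_of_not_mem (hm : 0 < m) {N : ℕ} (ω : Fin (N+1) → Fin m) (i : Fin (N+1))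
    (h : ω i ∉ maxSet ω) : maxSet (ω ∘ i.succAbove) = maxSet ω := by
  obtain ⟨j₀, hj₀⟩ := maxSet_nonempty hm ω
  have hj₀top := mem_maxSet.1 hj₀
  have hj₀ne : ω i ≠ j₀ := fun e => h (e ▸ hj₀)
  have hj₀del : count (ω ∘ i.succAbove) j₀ = count ω j₀ := count_del_eq ω i hj₀ne
  ext k
  rw [mem_maxSet, mem_maxSet]
  constructor
  · intro hk
    intro k'
    have h1 : count ω j₀ ≤ count (ω ∘ i.succAbove) k := hj₀del ▸ hk j₀
    have h2 := count_del_le ω i k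
    have := hj₀top k'
    omega
  · intro hk k'
    have hkne : ω i ≠ k := fun e => h (e ▸ mem_maxSet.2 hk)
    rw [count_del_eq ω i hkne]
    exact le_trans (count_del_le ω i k') (hk k')

lemma maxSet_del_of_mem_card {N : ℕ} (ω : Fin (N+1) → Fin m) (i : Fin (N+1))
    (h : ω i ∈ maxSet ω) (h2 : 1 < (maxSet ω).card) :
    maxSet (ω ∘ i.succAbove) = (maxSet ω).erase (ω i) := by
  obtain ⟨j', hj'mem, hj'ne⟩ := Finset.exists_mem_ne h2 (ω i)
  have hcnt : count ω j' = count ω (ω i) := count_eq_of_mem_maxSet hj'mem h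
  have hdelj' : count (ω ∘ i.succAbove) j' = count ω j' := count_del_eq ω i (Ne.symm hj'ne)
  have hdelself := count_del_self ω i
  ext k
  rw [mem_maxSet, Finset.mem_erase, mem_maxSet]
  constructor
  · intro hk
    have h1 : count ω j' ≤ count (ω ∘ i.succAbove) k := hdelj' ▸ hk j'
    have h2' := count_del_le ω i k
    have htop : count ω k = count ω (ω i) :=
      le_antisymm (mem_maxSet.1 h k) (by omega)
    have hkdel : count (ω ∘ i.succAbove) k = count ω k := by omega
    constructor
    · rintro rfl; omega
    · intro k'; rw [htop]; exact mem_maxSet.1 h k'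
  · rintro ⟨hkne, hk⟩ k'
    rw [count_del_eq ω i (Ne.symm hkne)]
    exact le_trans (count_del_le ω i k') (hk k')

lemma maxSet_del_of_single {N : ℕ} (ω : Fin (N+1) → Fin m) (i : Fin (N+1))
    (h : maxSet ω = {ω i}) : maxSet (ω ∘ i.succAbove) = tier ω (ω i) := by
  have hmemJ : ω i ∈ maxSet ω := h ▸ Finset.mem_singleton_self _
  have htop := mem_maxSet.1 hmemJ
  have hlt : ∀ k, k ≠ ω i → count ω k < count ω (ω i) := by
    intro k hk
    have hknot : k ∉ maxSet ω := by rw [h]; simpa using hk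
    rw [mem_maxSet] at hknot
    push_neg at hknot
    obtain ⟨k', hk'⟩ := hknot
    exact lt_of_lt_of_le hk' (htop k')
  have hdelself := count_del_self ω i
  ext k
  rw [mem_maxSet, mem_tier]
  constructor
  · intro hk
    rcases eq_or_ne k (ω i) with rfl | hne
    · exact Or.inl rfl
    · right
      rw [count_del_eq ω i (Ne.symm hne)] at hk
      have h1 := hk (ω i)
      have h2 := hlt k hne
      omega
  · intro hk k'
    have hmax : count (ω ∘ i.succAbove) k + 1 = count ω (ω i) := by
      rcases hk with rfl | hk
      · omega
      · rcases eq_or_ne k (ω i) with rfl | hne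
        · omega
        · rw [count_del_eq ω i (Ne.symm hne)]; exact hk
    rcases eq_or_ne k' (ω i) with rfl | hne'
    · omega
    · have := count_del_le ω i k'
      have := hlt k' hne'
      omega

lemma count_ge_one (hm : 0 < m) {N : ℕ} (ω : Fin (N+1) → Fin m) {j : Fin m}
    (hj : j ∈ maxSet ω) : 1 ≤ count ω j := by
  have h1 : 1 ≤ count ω (ω 0) := by
    rw [count]
    refine Finset.card_pos.2 ⟨0, ?_⟩
    simp
  exact le_trans h1 (mem_maxSet.1 hj (ω 0))

lemma marginal (p : Fin m → ℝ) (hsum : ∑ j, p j = 1) {N : ℕ} (i : Fin (N+1))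
    (f : (Fin N → Fin m) → ℝ) :
    ∑ ω : Fin (N+1) → Fin m, (∏ i', p (ω i')) * f (ω ∘ i.succAbove)
      = ∑ ω : Fin N → Fin m, (∏ i', p (ω i')) * f ω := by
  rw [← Equiv.sum_comp (Fin.insertNthEquiv (fun _ => Fin m) i)
      (fun ω => (∏ i', p (ω i')) * f (ω ∘ i.succAbove))]
  rw [Fintype.sum_prod_type]
  have hterm : ∀ (x : Fin m) (ω' : Fin N → Fin m),
      (∏ i', p ((Fin.insertNthEquiv (fun _ => Fin m) i) (x, ω') i')) *
        f ((Fin.insertNthEquiv (fun _ => Fin m) i) (x, ω') ∘ i.succAbove)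
      = p x * ((∏ i', p (ω' i')) * f ω') := by
    intro x ω'
    have happ : ((Fin.insertNthEquiv (fun _ => Fin m) i) (x, ω')) = i.insertNth x ω' := rfl
    rw [happ]
    have hcomp : (i.insertNth x ω' ∘ i.succAbove) = ω' := by
      funext j; simp [Function.comp_apply, Fin.insertNth_apply_succAbove]
    rw [hcomp]
    have hprod : (∏ i', p (Fin.insertNth (α := fun _ => Fin m) i x ω' i')) = p x * ∏ j, p (ω' j) := by
      rw [Fin.prod_univ_succAbove (fun i' => p (Fin.insertNth (α := fun _ => Fin m) i x ω' i')) i]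
      simp only [Fin.insertNth_apply_same, Fin.insertNth_apply_succAbove]
    rw [hprod]
    ring
  rw [Finset.sum_congr rfl fun x _ => Finset.sum_congr rfl fun ω' _ => hterm x ω']
  rw [Finset.sum_congr rfl fun x _ => (Finset.mul_sum _ _ _).symm, ← Finset.sum_mul, hsum, one_mul]

end MQ
end Part2

section Part3
namespace MQ
variable {m : ℕ}

noncomputable def hSfun (S : Finset (Fin m)) {N : ℕ} (ω : Fin N → Fin m) : ℝ :=
  ((maxSet ω ∩ S).card : ℝ) / ((maxSet ω).card : ℝ)

noncomputable def EE (p : Fin m → ℝ) (S : Finset (Fin m)) (N : ℕ) : ℝ :=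
  ∑ ω : Fin N → Fin m, (∏ i, p (ω i)) * hSfun S ω

noncomputable def posF (p : Fin m → ℝ) (S : Finset (Fin m)) {N : ℕ}
    (z : (Fin N → Fin m) × Fin m × Fin m) : ℝ :=
  if maxSet z.1 = {z.2.1} ∧ z.2.1 ∈ S ∧ z.2.2 ∈ tier z.1 z.2.1 ∧ z.2.2 ∉ S then
    (∏ i, p (z.1 i)) * (count z.1 z.2.1 : ℝ) / ((tier z.1 z.2.1).card : ℝ) else 0

noncomputable def negF (p : Fin m → ℝ) (S : Finset (Fin m)) {N : ℕ}
    (z : (Fin N → Fin m) × Fin m × Fin m) : ℝ :=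
  if maxSet z.1 = {z.2.1} ∧ z.2.1 ∉ S ∧ z.2.2 ∈ tier z.1 z.2.1 ∧ z.2.2 ∈ S then
    (∏ i, p (z.1 i)) * (count z.1 z.2.1 : ℝ) / ((tier z.1 z.2.1).card : ℝ) else 0

def Phi {m N : ℕ} (z : (Fin N → Fin m) × Fin m × Fin m) : (Fin N → Fin m) × Fin m × Fin m :=
  (⇑(Equiv.swap z.2.1 z.2.2) ∘ z.1, z.2.2, z.2.1)

lemma Phi_involutive {N : ℕ} : Function.Involutive (Phi (m := m) (N := N)) := by
  rintro ⟨ω, k0, u⟩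
  unfold Phi
  simp only
  refine Prod.ext ?_ rfl
  funext i
  simp only [Function.comp_apply]
  rw [Equiv.swap_comm u k0, Equiv.swap_apply_self]

lemma p_pos_of_mem (p : Fin m → ℝ) (hsum : ∑ j, p j = 1)
    {S : Finset (Fin m)} (hS : S = Finset.univ.filter fun j => ∀ k, p k ≤ p j)
    {k0 : Fin m} (hk : k0 ∈ S) : 0 < p k0 := by
  have htop : ∀ k, p k ≤ p k0 := (Finset.mem_filter.1 (hS ▸ hk)).2
  by_contra hle
  push_neg at hle
  have hs : ∑ j, p j ≤ 0 := Finset.sum_nonpos fun k _ => le_trans (htop k) hle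
  rw [hsum] at hs; linarith

lemma posF_nonneg (p : Fin m → ℝ) (hnn : ∀ j, 0 ≤ p j) (S : Finset (Fin m)) {N : ℕ}
    (z : (Fin N → Fin m) × Fin m × Fin m) : 0 ≤ posF p S z := by
  unfold posF
  split_ifs
  · apply div_nonneg _ (Nat.cast_nonneg _)
    exact mul_nonneg (Finset.prod_nonneg fun i _ => hnn _) (Nat.cast_nonneg _)
  · exact le_refl 0

lemma negF_nonneg (p : Fin m → ℝ) (hnn : ∀ j, 0 ≤ p j) (S : Finset (Fin m)) {N : ℕ}
    (z : (Fin N → Fin m) × Fin m × Fin m) : 0 ≤ negF p S z := by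
  unfold negF
  split_ifs
  · apply div_nonneg _ (Nat.cast_nonneg _)
    exact mul_nonneg (Finset.prod_nonneg fun i _ => hnn _) (Nat.cast_nonneg _)
  · exact le_refl 0

lemma neg_le_pos (p : Fin m → ℝ) (hnn : ∀ j, 0 ≤ p j) (hsum : ∑ j, p j = 1)
    (S : Finset (Fin m)) (hS : S = Finset.univ.filter fun j => ∀ k, p k ≤ p j)
    {N : ℕ} (z : (Fin N → Fin m) × Fin m × Fin m) :
    negF p S (Phi z) ≤ posF p S z := by
  obtain ⟨ω, k0, u⟩ := z
  by_cases hc : maxSet (⇑(Equiv.swap k0 u) ∘ ω) = {u} ∧ u ∉ S ∧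
      k0 ∈ tier (⇑(Equiv.swap k0 u) ∘ ω) u ∧ k0 ∈ S
  case neg =>
    have hz : negF p S (Phi (ω, k0, u)) = 0 := by
      unfold negF Phi; simp only; rw [if_neg hc]
    rw [hz]
    exact posF_nonneg p hnn S _
  case pos =>
    obtain ⟨h1, h2, h3, h4⟩ := hc
    have hk0u : k0 ≠ u := fun e => h2 (e ▸ h4)
    have hswk0 : Equiv.swap k0 u k0 = u := Equiv.swap_apply_left _ _
    have hswu : Equiv.swap k0 u u = k0 := Equiv.swap_apply_right _ _
    -- maxSet ω = {k0}
    have hmax2 : (maxSet ω).image (Equiv.swap k0 u) = {u} := by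
      rw [← maxSet_comp_swap]; exact h1
    have hIm : (maxSet ω).image (Equiv.swap k0 u) = ({k0} : Finset (Fin m)).image (Equiv.swap k0 u) := by
      rw [hmax2, Finset.image_singleton, hswk0]
    have hmaxω : maxSet ω = {k0} := Finset.image_injective (Equiv.injective _) hIm
    -- tier transport
    have htier2 : tier (⇑(Equiv.swap k0 u) ∘ ω) u = (tier ω k0).image (Equiv.swap k0 u) := by
      have := tier_comp_swap k0 u ω k0
      rwa [hswk0] at this
    have hu_tier : u ∈ tier ω k0 := by
      rw [htier2] at h3
      obtain ⟨a, ha, hae⟩ := Finset.mem_image.1 h3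
      have : a = u := by
        apply (Equiv.swap k0 u).injective
        rw [hae, hswu]
      exact this ▸ ha
    -- counts
    have hcnt_u : count (⇑(Equiv.swap k0 u) ∘ ω) u = count ω k0 := by
      rw [count_comp_swap, hswu]
    have hcard_t : (tier (⇑(Equiv.swap k0 u) ∘ ω) u).card = (tier ω k0).card := by
      rw [htier2]; exact Finset.card_image_of_injective _ (Equiv.injective _)
    have hcc : count ω u + 1 = count ω k0 := by
      rcases mem_tier.1 hu_tier with h | h
      · exact absurd h.symm hk0u
      · exact h
    have hb : 0 < p k0 := p_pos_of_mem p hsum hS h4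
    have hab : p u ≤ p k0 := by
      have h4' := h4
      rw [hS, Finset.mem_filter] at h4'
      exact h4'.2 u
    have hPω : 0 ≤ ∏ i, p (ω i) := Finset.prod_nonneg fun i _ => hnn _
    -- the probability comparison
    have hP2 : (∏ i, p (Equiv.swap k0 u (ω i))) ≤ ∏ i, p (ω i) := by
      rcases eq_or_lt_of_le (hnn u) with hz | hz
      · -- p u = 0
        have hcnt1 : 1 ≤ count (⇑(Equiv.swap k0 u) ∘ ω) u := by rw [hcnt_u]; omega
        have : ((Finset.univ.filter fun i => (⇑(Equiv.swap k0 u) ∘ ω) i = u)).Nonempty :=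
          Finset.card_pos.1 (by exact hcnt1)
        obtain ⟨i0, hi0⟩ := this
        have hi0' : Equiv.swap k0 u (ω i0) = u := (Finset.mem_filter.1 hi0).2
        have hzero : (∏ i, p (Equiv.swap k0 u (ω i))) = 0 :=
          Finset.prod_eq_zero (Finset.mem_univ i0) (by rw [hi0', ← hz])
        rw [hzero]; exact hPω
      · have hid := prod_swap_mul p k0 u hk0u ω
        rw [← hcc] at hid
        set a := p u with ha
        set b := p k0 with hbdef
        set c1 := count ω u with hc1
        set P1 := ∏ i, p (ω i) with hP1
        set P2 := ∏ i, p (Equiv.swap k0 u (ω i)) with hP2d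
        -- hid : P2 * (b ^ (c1+1) * a ^ c1) = P1 * (a ^ (c1+1) * b ^ c1)
        have key : P2 * (b ^ (c1 + 1) * a ^ c1) ≤ P1 * (b ^ (c1 + 1) * a ^ c1) := by
          calc P2 * (b ^ (c1 + 1) * a ^ c1) = P1 * (a ^ (c1 + 1) * b ^ c1) := hid
            _ = P1 * ((a ^ c1 * b ^ c1) * a) := by ring
            _ ≤ P1 * ((a ^ c1 * b ^ c1) * b) := by
                apply mul_le_mul_of_nonneg_left _ hPω
                apply mul_le_mul_of_nonneg_left hab
                positivity
            _ = P1 * (b ^ (c1 + 1) * a ^ c1) := by ring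
        exact le_of_mul_le_mul_right key (by positivity)
    -- wrap up
    unfold negF posF Phi
    simp only
    rw [if_pos ⟨h1, h2, h3, h4⟩, if_pos ⟨hmaxω, h4, hu_tier, h2⟩]
    rw [show count (⇑(Equiv.swap k0 u) ∘ ω) u = count ω k0 from hcnt_u, hcard_t]
    rw [div_eq_mul_inv, div_eq_mul_inv]
    apply mul_le_mul_of_nonneg_right _ (inv_nonneg.2 (Nat.cast_nonneg _))
    exact mul_le_mul_of_nonneg_right hP2 (Nat.cast_nonneg _)

lemma sum_neg_le_sum_pos (p : Fin m → ℝ) (hnn : ∀ j, 0 ≤ p j) (hsum : ∑ j, p j = 1)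
    (S : Finset (Fin m)) (hS : S = Finset.univ.filter fun j => ∀ k, p k ≤ p j) {N : ℕ} :
    (∑ z : (Fin N → Fin m) × Fin m × Fin m, negF p S z)
      ≤ ∑ z : (Fin N → Fin m) × Fin m × Fin m, posF p S z := by
  have h1 : (∑ z : (Fin N → Fin m) × Fin m × Fin m, negF p S z)
      = ∑ z : (Fin N → Fin m) × Fin m × Fin m, negF p S (Phi z) :=
    (Equiv.sum_comp (Phi_involutive (m := m) (N := N)).toPerm (negF p S)).symm
  rw [h1]
  exact Finset.sum_le_sum fun z _ => neg_le_pos p hnn hsum S hS z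

end MQ
end Part3

section Part4
namespace MQ
variable {m : ℕ}

lemma per_omega (hm : 0 < m) (p : Fin m → ℝ) (S : Finset (Fin m)) {N : ℕ}
    (ω : Fin (N+1) → Fin m) :
    (∏ i, p (ω i)) * (∑ i : Fin (N+1), (hSfun S ω - hSfun S (ω ∘ i.succAbove)))
      = (∑ k0, ∑ x, posF p S (ω, k0, x)) - (∑ k0, ∑ u, negF p S (ω, k0, u)) := by
  by_cases hone : ∃ k0, maxSet ω = {k0}
  · obtain ⟨k0, hk0⟩ := hone
    have htier0 : k0 ∈ tier ω k0 := mem_tier.2 (Or.inl rfl)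
    have htpos : 0 < (tier ω k0).card := Finset.card_pos.2 ⟨k0, htier0⟩
    set t := ((tier ω k0).card : ℝ) with htdef
    have htpos' : (0:ℝ) < t := by rw [htdef]; exact_mod_cast htpos
    have htne : t ≠ 0 := ne_of_gt htpos'
    set A := ((tier ω k0 ∩ S).card : ℝ) / t with hAdef
    have hdel : ∀ i : Fin (N+1), hSfun S (ω ∘ i.succAbove)
        = if ω i = k0 then A else hSfun S ω := by
      intro i
      by_cases h : ω i = k0
      · rw [if_pos h]
        unfold hSfun
        rw [maxSet_del_of_single ω i (by rw [hk0, h]), h]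
      · rw [if_neg h]
        unfold hSfun
        rw [maxSet_del_of_not_mem hm ω i (by rw [hk0]; simpa using h)]
    have hhs : hSfun S ω = if k0 ∈ S then 1 else 0 := by
      unfold hSfun
      rw [hk0]
      by_cases hk : k0 ∈ S
      · rw [if_pos hk, Finset.singleton_inter_of_mem hk]
        simp
      · rw [if_neg hk, Finset.singleton_inter_of_notMem hk]
        simp
    have hLHS : (∑ i : Fin (N+1), (hSfun S ω - hSfun S (ω ∘ i.succAbove)))
        = (count ω k0 : ℝ) * (hSfun S ω - A) := by
      calc ∑ i : Fin (N+1), (hSfun S ω - hSfun S (ω ∘ i.succAbove))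
          = ∑ i, (if ω i = k0 then hSfun S ω - A else 0) := by
            refine Finset.sum_congr rfl fun i _ => ?_
            rw [hdel i]
            by_cases h : ω i = k0
            · rw [if_pos h, if_pos h]
            · rw [if_neg h, if_neg h]; ring
        _ = ∑ i ∈ Finset.univ.filter (fun i => ω i = k0), (hSfun S ω - A) :=
            (Finset.sum_filter _ _).symm
        _ = (count ω k0 : ℝ) * (hSfun S ω - A) := by
            rw [Finset.sum_const, count, nsmul_eq_mul]
    rw [hLHS]
    have hposu : ∀ k0' x, k0' ≠ k0 → posF p S (ω, k0', x) = 0 := by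
      intro k0' x hne
      unfold posF
      simp only
      rw [if_neg]
      rintro ⟨hc, -⟩
      exact hne (Finset.singleton_injective (hk0.symm.trans hc)).symm
    have hnegu : ∀ k0' u, k0' ≠ k0 → negF p S (ω, k0', u) = 0 := by
      intro k0' u hne
      unfold negF
      simp only
      rw [if_neg]
      rintro ⟨hc, -⟩
      exact hne (Finset.singleton_injective (hk0.symm.trans hc)).symm
    rw [Finset.sum_eq_single_of_mem k0 (Finset.mem_univ _) (fun b _ hb =>
      Finset.sum_eq_zero fun x _ => hposu b x hb)]
    rw [Finset.sum_eq_single_of_mem k0 (Finset.mem_univ _) (fun b _ hb =>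
      Finset.sum_eq_zero fun u _ => hnegu b u hb)]
    by_cases hkS : k0 ∈ S
    · have hneg0 : ∀ u, negF p S (ω, k0, u) = 0 := by
        intro u
        unfold negF
        simp only
        rw [if_neg]
        rintro ⟨-, h2, -, -⟩
        exact h2 hkS
      have hpos : ∀ x, posF p S (ω, k0, x)
          = if x ∈ tier ω k0 ∧ x ∉ S then (∏ i, p (ω i)) * (count ω k0 : ℝ) / t else 0 := by
        intro x
        unfold posF
        simp only
        by_cases hx : x ∈ tier ω k0 ∧ x ∉ S
        · rw [if_pos ⟨hk0, hkS, hx.1, hx.2⟩, if_pos hx]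
        · rw [if_neg (fun hc => hx ⟨hc.2.2.1, hc.2.2.2⟩), if_neg hx]
      rw [Finset.sum_eq_zero fun u _ => hneg0 u, sub_zero,
        Finset.sum_congr rfl fun x _ => hpos x, ← Finset.sum_filter]
      have hfil : Finset.univ.filter (fun x => x ∈ tier ω k0 ∧ x ∉ S) = tier ω k0 \ S := by
        ext x; simp [Finset.mem_sdiff, and_comm]
      rw [hfil, Finset.sum_const, nsmul_eq_mul]
      rw [hhs, if_pos hkS]
      have hcards : ((tier ω k0 \ S).card : ℝ) = t - ((tier ω k0 ∩ S).card : ℝ) := by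
        have h := congrArg (Nat.cast : ℕ → ℝ) (Finset.card_sdiff_add_card_inter (tier ω k0) S)
        push_cast at h
        rw [htdef]
        linarith
      rw [hAdef, hcards]
      field_simp
    · have hpos0 : ∀ x, posF p S (ω, k0, x) = 0 := by
        intro x
        unfold posF
        simp only
        rw [if_neg]
        rintro ⟨-, h2, -, -⟩
        exact hkS h2
      have hneg : ∀ u, negF p S (ω, k0, u)
          = if u ∈ tier ω k0 ∧ u ∈ S then (∏ i, p (ω i)) * (count ω k0 : ℝ) / t else 0 := by
        intro u
        unfold negF
        simp only
        by_cases hu : u ∈ tier ω k0 ∧ u ∈ S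
        · rw [if_pos ⟨hk0, hkS, hu.1, hu.2⟩, if_pos hu]
        · rw [if_neg (fun hc => hu ⟨hc.2.2.1, hc.2.2.2⟩), if_neg hu]
      rw [Finset.sum_eq_zero fun x _ => hpos0 x,
        Finset.sum_congr rfl fun u _ => hneg u, ← Finset.sum_filter]
      have hfil : Finset.univ.filter (fun u => u ∈ tier ω k0 ∧ u ∈ S) = tier ω k0 ∩ S := by
        ext u; simp [Finset.mem_inter]
      rw [hfil, Finset.sum_const, nsmul_eq_mul]
      rw [hhs, if_neg hkS, hAdef]
      field_simp
      ring
  · -- maxSet has at least two elements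
    have hne := maxSet_nonempty hm ω
    have hcard2 : 1 < (maxSet ω).card := by
      have h1 : 0 < (maxSet ω).card := Finset.card_pos.2 hne
      by_contra hc
      push_neg at hc
      exact hone (Finset.card_eq_one.1 (le_antisymm hc h1))
    have hpos0 : ∀ k0 x, posF p S (ω, k0, x) = 0 := by
      intro k0 x
      unfold posF
      simp only
      rw [if_neg]
      rintro ⟨hc, -⟩
      rw [hc, Finset.card_singleton] at hcard2
      exact lt_irrefl _ hcard2
    have hneg0 : ∀ k0 u, negF p S (ω, k0, u) = 0 := by
      intro k0 u
      unfold negF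
      simp only
      rw [if_neg]
      rintro ⟨hc, -⟩
      rw [hc, Finset.card_singleton] at hcard2
      exact lt_irrefl _ hcard2
    rw [Finset.sum_eq_zero fun k0 _ => Finset.sum_eq_zero fun x _ => hpos0 k0 x,
      Finset.sum_eq_zero fun k0 _ => Finset.sum_eq_zero fun u _ => hneg0 k0 u, sub_zero]
    -- LHS is zero
    obtain ⟨j₀, hj₀⟩ := hne
    set M := count ω j₀ with hM
    have hcntJ : ∀ k ∈ maxSet ω, count ω k = M := fun k hk => count_eq_of_mem_maxSet hk hj₀
    have hjc1 : 1 ≤ (maxSet ω).card := le_of_lt hcard2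
    set jc := ((maxSet ω).card : ℝ) with hjc
    have hjc2 : (2:ℝ) ≤ jc := by
      rw [hjc]; exact_mod_cast hcard2
    have hjcne : jc - 1 ≠ 0 := by linarith
    have hjcne0 : jc ≠ 0 := by linarith
    set sc := (((maxSet ω) ∩ S).card : ℝ) with hsc
    have hdel : ∀ i, hSfun S (ω ∘ i.succAbove)
        = if ω i ∈ maxSet ω then (((maxSet ω).erase (ω i) ∩ S).card : ℝ) / (jc - 1)
          else hSfun S ω := by
      intro i
      by_cases h : ω i ∈ maxSet ω
      · rw [if_pos h]
        unfold hSfun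
        rw [maxSet_del_of_mem_card ω i h hcard2]
        congr 1
        rw [Finset.card_erase_of_mem h]
        rw [hjc]
        push_cast [hjc1]
        ring
      · rw [if_neg h]
        unfold hSfun
        rw [maxSet_del_of_not_mem hm ω i h]
    have hsum_del : (∑ i : Fin (N+1), hSfun S (ω ∘ i.succAbove)) = ((N:ℝ)+1) * hSfun S ω := by
      rw [Finset.sum_congr rfl fun i _ => hdel i]
      rw [sum_comp_count (fun k => if k ∈ maxSet ω
        then (((maxSet ω).erase k ∩ S).card : ℝ) / (jc - 1) else hSfun S ω) ω]
      rw [← Finset.sum_filter_add_sum_filter_not Finset.univ (fun k => k ∈ maxSet ω)]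
      have hfilJ : Finset.univ.filter (fun k => k ∈ maxSet ω) = maxSet ω := by
        ext k; simp
      have herase : ∀ k ∈ maxSet ω, (((maxSet ω).erase k ∩ S).card : ℝ)
          = sc - (if k ∈ S then 1 else 0) := by
        intro k hk
        have hee : (maxSet ω).erase k ∩ S = ((maxSet ω) ∩ S).erase k := by
          ext a
          simp only [Finset.mem_erase, Finset.mem_inter]
          tauto
        rw [hee]
        by_cases hks : k ∈ S
        · rw [if_pos hks,
            Finset.card_erase_of_mem (Finset.mem_inter.2 ⟨hk, hks⟩)]
          have h1 : 1 ≤ ((maxSet ω) ∩ S).card :=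
            Finset.card_pos.2 ⟨k, Finset.mem_inter.2 ⟨hk, hks⟩⟩
          rw [hsc]
          push_cast [h1]
          ring
        · rw [if_neg hks,
            Finset.erase_eq_of_notMem (fun hc => hks (Finset.mem_inter.1 hc).2), hsc]
          ring
      have hval : hSfun S ω = sc / jc := rfl
      have hA : (∑ k ∈ Finset.univ.filter (fun k => k ∈ maxSet ω),
          (count ω k : ℝ) * (if k ∈ maxSet ω
            then (((maxSet ω).erase k ∩ S).card : ℝ) / (jc - 1) else hSfun S ω))
          = (M:ℝ) * sc := by
        rw [hfilJ]
        rw [Finset.sum_congr rfl (fun k hk => by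
          rw [if_pos hk, hcntJ k hk, herase k hk] :
          ∀ k ∈ maxSet ω, (count ω k : ℝ) * (if k ∈ maxSet ω
            then (((maxSet ω).erase k ∩ S).card : ℝ) / (jc - 1) else hSfun S ω)
            = (M:ℝ) * ((sc - if k ∈ S then 1 else 0) / (jc - 1)))]
        rw [← Finset.mul_sum, ← Finset.sum_div, Finset.sum_sub_distrib,
          Finset.sum_const, Finset.sum_boole, nsmul_eq_mul, Finset.filter_mem_eq_inter]
        rw [← hjc, ← hsc]
        field_simp
      have hB : (∑ k ∈ Finset.univ.filter (fun k => ¬ k ∈ maxSet ω),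
          (count ω k : ℝ) * (if k ∈ maxSet ω
            then (((maxSet ω).erase k ∩ S).card : ℝ) / (jc - 1) else hSfun S ω))
          = (((N:ℝ)+1) - jc * M) * (sc / jc) := by
        rw [Finset.sum_congr rfl (fun k hk => by
          rw [if_neg (Finset.mem_filter.1 hk).2, hval] :
          ∀ k ∈ Finset.univ.filter (fun k => ¬ k ∈ maxSet ω),
            (count ω k : ℝ) * (if k ∈ maxSet ω
              then (((maxSet ω).erase k ∩ S).card : ℝ) / (jc - 1) else hSfun S ω)
            = (count ω k : ℝ) * (sc / jc))]
        rw [← Finset.sum_mul]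
        congr 1
        have h1 : (∑ k ∈ Finset.univ.filter (fun k => k ∈ maxSet ω), (count ω k : ℝ))
            + (∑ k ∈ Finset.univ.filter (fun k => ¬ k ∈ maxSet ω), (count ω k : ℝ))
            = (N:ℝ) + 1 := by
          rw [Finset.sum_filter_add_sum_filter_not]
          have hh := sum_count ω
          exact_mod_cast hh
        have h2 : (∑ k ∈ Finset.univ.filter (fun k => k ∈ maxSet ω), (count ω k : ℝ))
            = jc * M := by
          rw [hfilJ, Finset.sum_congr rfl (fun k hk => by rw [hcntJ k hk] :
            ∀ k ∈ maxSet ω, (count ω k : ℝ) = (M:ℝ)), Finset.sum_const, nsmul_eq_mul, hjc]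
        linarith
      rw [hA, hB, hval]
      field_simp
      ring
    have hfinal : (∑ i : Fin (N+1), (hSfun S ω - hSfun S (ω ∘ i.succAbove))) = 0 := by
      rw [Finset.sum_sub_distrib, hsum_del, Finset.sum_const, Finset.card_univ,
        Fintype.card_fin, nsmul_eq_mul]
      push_cast
      ring
    rw [hfinal, mul_zero]

end MQ
end Part4

section Part5
namespace MQ
variable {m : ℕ}

lemma EE_mono (hm : 0 < m) (p : Fin m → ℝ) (hnn : ∀ j, 0 ≤ p j) (hsum : ∑ j, p j = 1)
    (S : Finset (Fin m)) (hS : S = Finset.univ.filter fun j => ∀ k, p k ≤ p j) (N : ℕ) :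
    EE p S N ≤ EE p S (N+1) := by
  have h1 : ((N:ℝ)+1) * EE p S N
      = ∑ ω : Fin (N+1) → Fin m, (∏ i, p (ω i)) * (∑ i : Fin (N+1), hSfun S (ω ∘ i.succAbove)) := by
    rw [Finset.sum_congr rfl fun ω _ =>
      (Finset.mul_sum (Finset.univ) (fun i : Fin (N+1) => hSfun S (ω ∘ i.succAbove)) (∏ i, p (ω i)) :
        (∏ i, p (ω i)) * (∑ i : Fin (N+1), hSfun S (ω ∘ i.succAbove)) = _)]
    rw [Finset.sum_comm]
    rw [Finset.sum_congr rfl fun i _ => marginal p hsum i (hSfun S)]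
    rw [Finset.sum_const, Finset.card_univ, Fintype.card_fin, nsmul_eq_mul, EE]
    push_cast
    ring
  have h2 : ((N:ℝ)+1) * EE p S (N+1)
      = ∑ ω : Fin (N+1) → Fin m, (∏ i, p (ω i)) * (∑ i : Fin (N+1), hSfun S ω) := by
    unfold EE
    rw [Finset.mul_sum]
    refine Finset.sum_congr rfl fun ω _ => ?_
    rw [Finset.sum_const, Finset.card_univ, Fintype.card_fin, nsmul_eq_mul]
    push_cast
    ring
  have key : ((N:ℝ)+1) * (EE p S (N+1) - EE p S N)
      = (∑ z : (Fin (N+1) → Fin m) × Fin m × Fin m, posF p S z)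
        - (∑ z : (Fin (N+1) → Fin m) × Fin m × Fin m, negF p S z) := by
    rw [mul_sub, h1, h2, ← Finset.sum_sub_distrib]
    have hper : ∀ ω : Fin (N+1) → Fin m,
        (∏ i, p (ω i)) * (∑ i : Fin (N+1), hSfun S ω)
          - (∏ i, p (ω i)) * (∑ i : Fin (N+1), hSfun S (ω ∘ i.succAbove))
        = (∑ k0, ∑ x, posF p S (ω, k0, x)) - (∑ k0, ∑ u, negF p S (ω, k0, u)) := by
      intro ω
      rw [← mul_sub, ← Finset.sum_sub_distrib]
      exact per_omega hm p S ω
    rw [Finset.sum_congr rfl fun ω _ => hper ω, Finset.sum_sub_distrib]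
    have hp : (∑ z : (Fin (N+1) → Fin m) × Fin m × Fin m, posF p S z)
        = ∑ ω : Fin (N+1) → Fin m, ∑ k0, ∑ x, posF p S (ω, k0, x) := by
      rw [Fintype.sum_prod_type]
      exact Finset.sum_congr rfl fun ω _ =>
        Fintype.sum_prod_type (f := fun y : Fin m × Fin m => posF p S (ω, y.1, y.2))
    have hq : (∑ z : (Fin (N+1) → Fin m) × Fin m × Fin m, negF p S z)
        = ∑ ω : Fin (N+1) → Fin m, ∑ k0, ∑ u, negF p S (ω, k0, u) := by
      rw [Fintype.sum_prod_type]
      exact Finset.sum_congr rfl fun ω _ =>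
        Fintype.sum_prod_type (f := fun y : Fin m × Fin m => negF p S (ω, y.1, y.2))
    rw [hp, hq]
  have hd : 0 ≤ ((N:ℝ)+1) * (EE p S (N+1) - EE p S N) := by
    rw [key]
    have := sum_neg_le_sum_pos p hnn hsum S hS (N := N+1)
    linarith
  have hNpos : (0:ℝ) < (N:ℝ)+1 := by positivity
  nlinarith

lemma majority_eq (hm : 0 < m) (p : Fin m → ℝ)
    (S : Finset (Fin m)) (hS : S = Finset.univ.filter fun j => ∀ k, p k ≤ p j)
    (hmem : (⟨0, hm⟩ : Fin m) ∈ S) (N : ℕ) :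
    (S.card : ℝ) * majorityProb p N ⟨0, hm⟩ = EE p S N := by
  have hswap : ∀ y ∈ S, majorityProb p N ⟨0,hm⟩ = majorityProb p N y := by
    intro y hy
    have h0top : ∀ k, p k ≤ p ⟨0,hm⟩ := by
      have h := hmem; rw [hS, Finset.mem_filter] at h; exact h.2
    have hytop : ∀ k, p k ≤ p y := by
      rw [hS, Finset.mem_filter] at hy; exact hy.2
    have hpy : p y = p ⟨0,hm⟩ := le_antisymm (h0top y) (hytop _)
    set σ := Equiv.swap (⟨0,hm⟩ : Fin m) y with hσ
    have hpσ : ∀ k, p (σ k) = p k := by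
      intro k
      rcases eq_or_ne k ⟨0,hm⟩ with rfl | h1
      · rw [hσ, Equiv.swap_apply_left]; exact hpy
      rcases eq_or_ne k y with rfl | h2
      · rw [hσ, Equiv.swap_apply_right]; exact hpy.symm
      · rw [hσ, Equiv.swap_apply_of_ne_of_ne h1 h2]
    unfold majorityProb
    apply Fintype.sum_equiv (Equiv.arrowCongr (Equiv.refl (Fin N)) σ)
    intro ω
    have harr : (Equiv.arrowCongr (Equiv.refl (Fin N)) σ) ω = ⇑σ ∘ ω := by
      funext i; simp [Equiv.arrowCongr]
    rw [harr]
    congr 1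
    · rw [show (∏ i, p ((⇑σ ∘ ω) i)) = ∏ i, p (ω i) from
        Finset.prod_congr rfl fun i _ => hpσ (ω i)]
    · rw [hσ, maxSet_comp_swap]
      have hmem_iff : y ∈ (maxSet ω).image (Equiv.swap (⟨0,hm⟩ : Fin m) y)
          ↔ (⟨0,hm⟩ : Fin m) ∈ maxSet ω := by
        constructor
        · intro h
          obtain ⟨a, ha, hae⟩ := Finset.mem_image.1 h
          have : a = ⟨0,hm⟩ := by
            apply (Equiv.swap (⟨0,hm⟩ : Fin m) y).injective
            rw [hae, Equiv.swap_apply_left]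
          exact this ▸ ha
        · intro h
          exact Finset.mem_image.2 ⟨_, h, Equiv.swap_apply_left _ _⟩
      rw [Finset.card_image_of_injective _ (Equiv.swap (⟨0,hm⟩ : Fin m) y).injective]
      by_cases h : (⟨0,hm⟩ : Fin m) ∈ maxSet ω
      · rw [if_pos h, if_pos (hmem_iff.2 h)]
      · rw [if_neg h, if_neg (fun hc => h (hmem_iff.1 hc))]
  calc (S.card : ℝ) * majorityProb p N ⟨0,hm⟩
      = ∑ y ∈ S, majorityProb p N y := by
        rw [Finset.sum_congr rfl (fun y hy => (hswap y hy).symm), Finset.sum_const,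
          nsmul_eq_mul]
    _ = ∑ ω : Fin N → Fin m, (∏ i, p (ω i)) * hSfun S ω := by
        unfold majorityProb
        rw [Finset.sum_comm]
        refine Finset.sum_congr rfl fun ω _ => ?_
        unfold hSfun
        rw [← Finset.mul_sum]
        congr 1
        rw [← Finset.sum_filter, Finset.sum_const, nsmul_eq_mul, Finset.filter_mem_eq_inter,
          Finset.inter_comm]
        ring
    _ = EE p S N := rfl

end MQ
end Part5


/-- For a moderate question (`a_1` is among the `|S| > 1` most likely
answers), the majority-vote success probability is non-decreasing in `N`. -/
theorem moderate_question_monotone {m : ℕ} (hm : 0 < m) (p : Fin m → ℝ)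
    (hnn : ∀ j, 0 ≤ p j) (hsum : ∑ j, p j = 1)
    (S : Finset (Fin m)) (hS : S = Finset.univ.filter fun j => ∀ k, p k ≤ p j)
    (hmem : (⟨0, hm⟩ : Fin m) ∈ S) (hcard : 1 < S.card) :
    Monotone (fun N => majorityProb p N ⟨0, hm⟩) := by
  have hcard0 : (0:ℝ) < (S.card : ℝ) := by
    have : 0 < S.card := lt_trans Nat.zero_lt_one hcard
    exact_mod_cast this
  apply monotone_nat_of_le_succ
  intro N
  have h1 := MQ.majority_eq hm p S hS hmem N
  have h2 := MQ.majority_eq hm p S hS hmem (N+1)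
  have h3 := MQ.EE_mono hm p hnn hsum S hS N
  have hmul : (S.card:ℝ) * majorityProb p N ⟨0,hm⟩
      ≤ (S.card:ℝ) * majorityProb p (N+1) ⟨0,hm⟩ := by
    rw [h1, h2]; exact h3
  exact le_of_mul_le_mul_left hmul hcard0
end

section
/- If there exists an index q ≠ 1 with p_q > p_1 (i.e., a_1 is not a most likely answer; a 'hard question'), then the majority-vote success probability Pr(a_1 | p; N) tends to 0 as N → ∞. -/
open Finset Filter

/-- Regroup the product of probabilities by fibers. -/
lemma prod_eq_prod_pow_count {m N : ℕ} (p : Fin m → ℝ) (ω : Fin N → Fin m) :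
    ∏ i, p (ω i) = ∏ j, p j ^ count ω j := by
  rw [← Finset.prod_fiberwise' Finset.univ ω p]
  refine Finset.prod_congr rfl fun j _ => ?_
  rw [Finset.prod_const, count]

/-- Key inequality: if `y ≤ x` and `0 ≤ a ≤ b` then `a^x * b^y ≤ √(ab)^(x+y)`. -/
lemma pow_mul_pow_le {a b : ℝ} (ha : 0 ≤ a) (hab : a ≤ b) {x y : ℕ} (hyx : y ≤ x) :
    a ^ x * b ^ y ≤ Real.sqrt (a * b) ^ (x + y) := by
  have hb : 0 ≤ b := ha.trans hab
  have h1 : 0 ≤ a ^ x * b ^ y := mul_nonneg (pow_nonneg ha _) (pow_nonneg hb _)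
  have h2 : 0 ≤ Real.sqrt (a * b) ^ (x + y) := pow_nonneg (Real.sqrt_nonneg _) _
  have hsq : (a ^ x * b ^ y) ^ 2 ≤ (Real.sqrt (a * b) ^ (x + y)) ^ 2 := by
    rw [← pow_mul, pow_mul', Real.sq_sqrt (mul_nonneg ha hb)]
    have e1 : 2 * x = (x + y) + (x - y) := by omega
    have e2 : 2 * y + (x - y) = x + y := by omega
    calc (a ^ x * b ^ y) ^ 2 = a ^ (2 * x) * b ^ (2 * y) := by
          rw [mul_pow, ← pow_mul, ← pow_mul, mul_comm x 2, mul_comm y 2]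
      _ = a ^ (x + y) * a ^ (x - y) * b ^ (2 * y) := by rw [e1, pow_add]
      _ ≤ a ^ (x + y) * b ^ (x - y) * b ^ (2 * y) := by
          exact mul_le_mul_of_nonneg_right
            (mul_le_mul_of_nonneg_left (pow_le_pow_left₀ ha hab _) (pow_nonneg ha _))
            (pow_nonneg hb _)
      _ = a ^ (x + y) * b ^ (x + y) := by rw [mul_assoc, ← pow_add, add_comm (x - y), e2]
      _ = (a * b) ^ (x + y) := (mul_pow a b _).symm
  exact le_of_pow_le_pow_left₀ two_ne_zero h2 (by simpa using hsq)

/-- For a hard question (some wrong answer `a_q` is strictly more likely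
than `a_1`), the majority-vote success probability tends to `0` as `N → ∞`. -/
theorem hard_question_tendsto_zero {m : ℕ} (hm : 0 < m) (p : Fin m → ℝ)
    (hnn : ∀ j, 0 ≤ p j) (hsum : ∑ j, p j = 1)
    (hhard : ∃ q : Fin m, q ≠ (⟨0, hm⟩ : Fin m) ∧ p ⟨0, hm⟩ < p q) :
    Tendsto (fun N => majorityProb p N ⟨0, hm⟩) atTop (nhds 0) := by
  obtain ⟨q, hq, hlt⟩ := hhard
  set z : Fin m := ⟨0, hm⟩ with hzdef
  have hzq : z ≠ q := fun h => hq h.symm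
  set c : ℝ := Real.sqrt (p z * p q) with hc
  set p' : Fin m → ℝ := fun j => if j = z ∨ j = q then c else p j with hp'
  have hp'nn : ∀ j, 0 ≤ p' j := by
    intro j
    simp only [hp']
    split
    · exact Real.sqrt_nonneg _
    · exact hnn j
  set s : ℝ := ∑ j, p' j with hs
  have hs0 : 0 ≤ s := Finset.sum_nonneg fun j _ => hp'nn j
  have hsum2 : s = (∑ j ∈ univ \ {z, q}, p j) + (c + c) := by
    rw [hs, ← Finset.sum_sdiff (Finset.subset_univ {z, q})]
    congr 1
    · refine Finset.sum_congr rfl fun j hj => ?_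
      simp only [Finset.mem_sdiff, Finset.mem_insert, Finset.mem_singleton, not_or] at hj
      simp [hp', hj.2.1, hj.2.2]
    · rw [Finset.sum_pair hzq]; simp [hp']
  have hsum1 : (∑ j ∈ univ \ {z, q}, p j) + (p z + p q) = 1 := by
    rw [← Finset.sum_pair hzq, Finset.sum_sdiff (Finset.subset_univ {z, q}), hsum]
  have hcsq : c = Real.sqrt (p z) * Real.sqrt (p q) := Real.sqrt_mul (hnn z) _
  have hs1 : s < 1 := by
    have hsqz := Real.sq_sqrt (hnn z)
    have hsqq := Real.sq_sqrt (hnn q)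
    have hlt' : Real.sqrt (p z) < Real.sqrt (p q) := Real.sqrt_lt_sqrt (hnn z) hlt
    nlinarith [hsum2, hsum1]
  have hnonneg : ∀ N, 0 ≤ majorityProb p N z := by
    intro N
    refine Finset.sum_nonneg fun ω _ => mul_nonneg (Finset.prod_nonneg fun i _ => hnn _) ?_
    by_cases h : z ∈ maxSet ω
    · simp only [if_pos h]; positivity
    · simp [h]
  have hbound : ∀ N, majorityProb p N z ≤ s ^ N := by
    intro N
    have key : ∀ ω : Fin N → Fin m, (∏ i, p (ω i)) *
        (if z ∈ maxSet ω then (1 : ℝ) / ((maxSet ω).card : ℝ) else 0) ≤ ∏ i, p' (ω i) := by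
      intro ω
      have hprodnn : 0 ≤ ∏ i, p (ω i) := Finset.prod_nonneg fun i _ => hnn _
      have hp'prod : 0 ≤ ∏ i, p' (ω i) := Finset.prod_nonneg fun i _ => hp'nn _
      by_cases hz : z ∈ maxSet ω
      · have hcount : count ω q ≤ count ω z := by
          simp only [maxSet, Finset.mem_filter, Finset.mem_univ, true_and] at hz
          exact hz q
        have hcard : (1 : ℝ) ≤ ((maxSet ω).card : ℝ) := by
          have : 0 < (maxSet ω).card := Finset.card_pos.mpr ⟨z, hz⟩
          exact_mod_cast this
        have hite : (if z ∈ maxSet ω then (1 : ℝ) / ((maxSet ω).card : ℝ) else 0) ≤ 1 := by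
          rw [if_pos hz]
          exact div_le_one_of_le₀ hcard (by linarith)
        have hitenn : 0 ≤ (if z ∈ maxSet ω then (1 : ℝ) / ((maxSet ω).card : ℝ) else 0) := by
          rw [if_pos hz]; positivity
        have h1 : (∏ i, p (ω i)) ≤ ∏ i, p' (ω i) := by
          rw [prod_eq_prod_pow_count, prod_eq_prod_pow_count,
              ← Finset.prod_sdiff (Finset.subset_univ {z, q}),
              ← Finset.prod_sdiff (Finset.subset_univ {z, q})]
          have hsd : ∏ j ∈ univ \ {z, q}, p' j ^ count ω j
              = ∏ j ∈ univ \ {z, q}, p j ^ count ω j := by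
            refine Finset.prod_congr rfl fun j hj => ?_
            simp only [Finset.mem_sdiff, Finset.mem_insert, Finset.mem_singleton, not_or] at hj
            simp [hp', hj.2.1, hj.2.2]
          rw [hsd]
          refine mul_le_mul_of_nonneg_left ?_
            (Finset.prod_nonneg fun j _ => pow_nonneg (hnn j) _)
          rw [Finset.prod_pair hzq, Finset.prod_pair hzq]
          have : p' z ^ count ω z * p' q ^ count ω q = c ^ (count ω z + count ω q) := by
            rw [pow_add]; simp [hp']
          rw [this]
          exact pow_mul_pow_le (hnn z) (le_of_lt hlt) hcount
        calc (∏ i, p (ω i)) * _ ≤ (∏ i, p (ω i)) * 1 :=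
              mul_le_mul_of_nonneg_left hite hprodnn
          _ = ∏ i, p (ω i) := mul_one _
          _ ≤ ∏ i, p' (ω i) := h1
      · rw [if_neg hz, mul_zero]; exact hp'prod
    calc majorityProb p N z ≤ ∑ ω : Fin N → Fin m, ∏ i, p' (ω i) :=
          Finset.sum_le_sum fun ω _ => key ω
      _ = ∏ _i : Fin N, ∑ j, p' j := (Fintype.prod_sum fun _ j => p' j).symm
      _ = s ^ N := by rw [← hs, Finset.prod_const, Finset.card_univ, Fintype.card_fin]
  exact squeeze_zero hnonneg hbound (tendsto_pow_atTop_nhds_zero_of_lt_one hs0 hs1)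
end

section
/- If there exists an index q ≠ 1 with p_q > p_1, then the probability that answer a_1's count is at least answer a_q's count among N i.i.d. samples, Pr(X_1(ω) ≥ X_q(ω)), tends to 0 as N → ∞. -/
open Finset Filter

lemma prod_count_eq {m N : ℕ} (w : Fin m → ℝ) (ω : Fin N → Fin m) :
    ∏ i, w (ω i) = ∏ j, w j ^ count ω j := by
  rw [← Finset.prod_fiberwise_of_maps_to (fun i _ => mem_univ (ω i)) (fun i => w (ω i))]
  refine Finset.prod_congr rfl fun j _ => ?_
  rw [Finset.prod_congr rfl (fun i hi => by rw [(Finset.mem_filter.mp hi).2]),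
    Finset.prod_const, count]

/-- If some wrong answer `a_q` is strictly more likely than `a₁`, the
probability that `a₁`'s count is at least `a_q`'s count tends to `0` as `N → ∞`. -/
theorem count_ge_tendsto_zero {m : ℕ} (hm : 0 < m) (p : Fin m → ℝ)
    (hnn : ∀ j, 0 ≤ p j) (hsum : ∑ j, p j = 1)
    (q : Fin m) (hq : q ≠ (⟨0, hm⟩ : Fin m)) (hpq : p ⟨0, hm⟩ < p q) :
    Tendsto
      (fun N => ∑ ω : Fin N → Fin m,
        if count ω q ≤ count ω ⟨0, hm⟩ then ∏ i, p (ω i) else 0)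
      atTop (nhds 0) := by
  set j1 : Fin m := ⟨0, hm⟩ with hj1
  set a := p j1 with hadef
  set b := p q with hbdef
  have ha : 0 ≤ a := hnn j1
  have hb : 0 < b := lt_of_le_of_lt ha hpq
  have hab : 0 < a + b := by linarith
  set t : ℝ := 2 * b / (a + b) with ht
  have ht0 : 0 < t := by positivity
  have ht1 : 1 < t := by rw [ht, lt_div_iff₀ hab]; linarith
  set w : Fin m → ℝ := fun j => if j = j1 then t else if j = q then 1 / t else 1 with hw
  have hw0 : ∀ j, 0 ≤ w j := by
    intro j; simp only [hw]; split_ifs <;> positivity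
  have hqmem : q ∈ univ.erase j1 := Finset.mem_erase.mpr ⟨hq, mem_univ q⟩
  -- the remaining mass
  have hrest : a + (b + ∑ j ∈ (univ.erase j1).erase q, p j) = 1 := by
    rw [Finset.add_sum_erase _ p hqmem, Finset.add_sum_erase _ p (mem_univ j1)]
    exact hsum
  have hrest_nonneg : 0 ≤ ∑ j ∈ (univ.erase j1).erase q, p j :=
    Finset.sum_nonneg fun j _ => hnn j
  set r : ℝ := ∑ j, p j * w j with hr
  have hr_eq : r = a * t + (b * (1 / t) + ∑ j ∈ (univ.erase j1).erase q, p j) := by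
    rw [hr, ← Finset.add_sum_erase _ (fun j => p j * w j) (mem_univ j1),
      ← Finset.add_sum_erase _ (fun j => p j * w j) hqmem]
    have h1 : w j1 = t := by simp [hw]
    have h2 : w q = 1 / t := by simp [hw, hq]
    rw [h1, h2]
    congr 1
    congr 1
    refine Finset.sum_congr rfl fun j hj => ?_
    have hj' := Finset.mem_erase.mp hj
    have hj'' := Finset.mem_erase.mp hj'.2
    simp [hw, hj'.1, hj''.1]
  have hkey : a * t + b * (1 / t) < a + b := by
    rw [ht]
    have h2b : (0:ℝ) < 2 * b := by linarith
    rw [one_div, inv_div, ← mul_div_assoc, ← mul_div_assoc,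
      div_add_div _ _ (ne_of_gt hab) (ne_of_gt h2b), div_lt_iff₀ (by positivity)]
    have hd : 0 < b - a := sub_pos.mpr hpq
    nlinarith [mul_pos hb (mul_pos hd hd)]
  have hr_lt : r < 1 := by rw [hr_eq]; linarith
  have hr0 : 0 ≤ r := by
    rw [hr_eq]
    have h1 : 0 ≤ a * t := by positivity
    have h2 : 0 ≤ b * (1 / t) := by positivity
    linarith
  -- the main bound
  have hbound : ∀ N : ℕ, (∑ ω : Fin N → Fin m,
      if count ω q ≤ count ω j1 then ∏ i, p (ω i) else 0) ≤ r ^ N := by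
    intro N
    have hexp : r ^ N = ∑ ω : Fin N → Fin m, ∏ i, (p (ω i) * w (ω i)) := by
      calc r ^ N = ∏ _i : Fin N, r := by
            rw [Finset.prod_const, Finset.card_univ, Fintype.card_fin]
        _ = ∑ ω ∈ Fintype.piFinset (fun _ : Fin N => (univ : Finset (Fin m))),
              ∏ i, (p (ω i) * w (ω i)) := Finset.prod_univ_sum _ _
        _ = ∑ ω : Fin N → Fin m, ∏ i, (p (ω i) * w (ω i)) := by
            rw [Fintype.piFinset_univ]
    rw [hexp]
    refine Finset.sum_le_sum fun ω _ => ?_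
    have hprodnn : 0 ≤ ∏ i, p (ω i) := Finset.prod_nonneg fun i _ => hnn _
    by_cases h : count ω q ≤ count ω j1
    · simp only [h, if_true]
      rw [Finset.prod_mul_distrib]
      refine le_mul_of_one_le_right hprodnn ?_
      rw [prod_count_eq]
      rw [← Finset.mul_prod_erase _ _ (mem_univ j1), ← Finset.mul_prod_erase _ _ hqmem]
      have h1 : w j1 = t := by simp [hw]
      have h2 : w q = 1 / t := by simp [hw, hq]
      have h3 : ∏ j ∈ (univ.erase j1).erase q, w j ^ count ω j = 1 := by
        refine Finset.prod_eq_one fun j hj => ?_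
        have hj' := Finset.mem_erase.mp hj
        have hj'' := Finset.mem_erase.mp hj'.2
        simp [hw, hj'.1, hj''.1]
      rw [h1, h2, h3, mul_one, one_div, inv_pow, ← div_eq_mul_inv,
        le_div_iff₀ (by positivity), one_mul]
      exact pow_le_pow_right₀ ht1.le h
    · simp only [h, if_false]
      exact Finset.prod_nonneg fun i _ => mul_nonneg (hnn _) (hw0 _)
  have hnonneg : ∀ N : ℕ, 0 ≤ ∑ ω : Fin N → Fin m,
      if count ω q ≤ count ω j1 then ∏ i, p (ω i) else 0 := by
    intro N
    refine Finset.sum_nonneg fun ω _ => ?_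
    split_ifs
    · exact Finset.prod_nonneg fun i _ => hnn _
    · exact le_refl 0
  exact squeeze_zero hnonneg hbound (tendsto_pow_atTop_nhds_zero_of_lt_one hr0 hr_lt)
end
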